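/- arXiv:2009.09720 — 5 statements merged into one kernel-verified Lean document; each statement's English description precedes it below -/
import Mathlib

section
/- Let M be an open subset of ℂⁿ, let f : ℂⁿ → ℂ be holomorphic on M, and let K, δ : M → ℝ be continuous positive functions. Suppose z ∈ M and r > 0 are such that the closed polydisk D̄_r(z) = {w : |w_k − z_k| ≤ r for k = 1,…,n} is contained in M, and suppose ∫_M |f(w)|² K(w)⁻¹ δ(w) dμ_L(w) < ∞, where μ_L is Lebesgue measure on ℂⁿ. Then |f(z)|² ≤ (π r²)^{−2n} · (∫_M |f(w)|² K(w)⁻¹ δ(w) dμ_L(w)) · (∫_{D̄_r(z)} K(w) δ(w)⁻¹ dμ_L(w)). In particular the evaluation map f ↦ f(z) is continuous on the weighted L² space of holomorphic functions. -/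
open MeasureTheory

section EvalAux
open Metric Real Complex intervalIntegral Set


lemma circle_mean {f : ℂ → ℂ} {c : ℂ} {s : ℝ} (hs : 0 < s)
    (hf : DifferentiableOn ℂ f (closedBall c s)) :
    ∫ θ in (0:ℝ)..(2 * Real.pi), f (circleMap c s θ) = (2 * Real.pi) • f c := by
  have h := hf.circleIntegral_sub_inv_smul (Metric.mem_ball_self hs)
  rw [circleIntegral] at h
  simp only [deriv_circleMap, circleMap_sub_center, smul_eq_mul] at h
  have key : ∀ θ : ℝ, circleMap 0 s θ * Complex.I * ((circleMap 0 s θ)⁻¹ * f (circleMap c s θ))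
      = Complex.I * f (circleMap c s θ) := by
    intro θ
    have h0 : circleMap 0 s θ ≠ 0 := by
      simpa using circleMap_ne_center (c := (0:ℂ)) hs.ne' (θ := θ)
    field_simp
  rw [intervalIntegral.integral_congr (fun θ _ => key θ),
    intervalIntegral.integral_const_mul] at h
  have hI : (Complex.I : ℂ) ≠ 0 := Complex.I_ne_zero
  have : (∫ θ in (0:ℝ)..(2 * Real.pi), f (circleMap c s θ)) = 2 * Real.pi * f c := by
    have h' : Complex.I * (∫ θ in (0:ℝ)..(2 * Real.pi), f (circleMap c s θ))
        = Complex.I * (2 * Real.pi * f c) := by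
      rw [h]; ring
    exact mul_left_cancel₀ hI h'
  rw [this]
  simp [smul_eq_mul]

lemma disk_mean {g : ℂ → ℂ} {U : Set ℂ} (hU : IsOpen U) (hg : DifferentiableOn ℂ g U)
    {c : ℂ} {r : ℝ} (hr : 0 < r) (hsub : closedBall c r ⊆ U) :
    ∫ w in closedBall c r, g w = (Real.pi * r ^ 2) • g c := by
  have htrans : ∫ w in closedBall c r, g w = ∫ w in closedBall (0:ℂ) r, g (c + w) := by
    have hmp : MeasurePreserving (fun w : ℂ => c + w) volume volume :=
      measurePreserving_add_left volume c
    have hpre : (fun w : ℂ => c + w) ⁻¹' closedBall c r = closedBall (0:ℂ) r := by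
      ext w
      simp [Complex.dist_eq, add_sub_cancel_left]
    rw [← hpre, hmp.setIntegral_preimage_emb (measurableEmbedding_addLeft c)]
  set F : ℂ → ℂ := (closedBall (0:ℂ) r).indicator (fun w => g (c + w)) with hF
  have hind : ∫ w in closedBall (0:ℂ) r, g (c + w) = ∫ w, F w := by
    rw [hF, MeasureTheory.integral_indicator measurableSet_closedBall]
  rw [htrans, hind, ← Complex.integral_comp_polarCoord_symm F]
  have htarget : polarCoord.target = Set.Ioi (0:ℝ) ×ˢ Set.Ioo (-Real.pi) Real.pi := rfl
  set S : Set (ℝ × ℝ) := Set.Ioc (0:ℝ) r ×ˢ Set.Ioo (-Real.pi) Real.pi with hS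
  set h' : ℝ × ℝ → ℂ := fun p => p.1 • g (c + Complex.polarCoord.symm p) with hh'
  have hSsub : S ⊆ polarCoord.target := by
    rw [htarget]
    exact Set.prod_mono_left Set.Ioc_subset_Ioi_self
  have hcongr : ∀ p ∈ polarCoord.target,
      p.1 • F (Complex.polarCoord.symm p) = S.indicator h' p := by
    rintro ⟨s, θ⟩ hp
    rw [htarget] at hp
    obtain ⟨hs, hθ⟩ := hp
    simp only [Set.mem_Ioi] at hs
    by_cases hsr : s ≤ r
    · have hpS : (s, θ) ∈ S := ⟨⟨hs, hsr⟩, hθ⟩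
      rw [Set.indicator_of_mem hpS, hF]
      have hmem : Complex.polarCoord.symm (s, θ) ∈ closedBall (0:ℂ) r := by
        simp only [mem_closedBall, Complex.dist_eq, sub_zero]
        rw [Complex.norm_polarCoord_symm]
        simpa [abs_of_pos hs] using hsr
      rw [Set.indicator_of_mem hmem]
    · have hpS : (s, θ) ∉ S := by
        intro hmem
        exact hsr hmem.1.2
      rw [Set.indicator_of_notMem hpS, hF]
      have hmem : Complex.polarCoord.symm (s, θ) ∉ closedBall (0:ℂ) r := by
        simp only [mem_closedBall, Complex.dist_eq, sub_zero]
        rw [Complex.norm_polarCoord_symm]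
        rw [abs_of_pos hs]
        exact fun h => hsr h
      rw [Set.indicator_of_notMem hmem, smul_zero]
  rw [setIntegral_congr_fun polarCoord.open_target.measurableSet hcongr,
    MeasureTheory.setIntegral_indicator (by measurability),
    Set.inter_eq_self_of_subset_right hSsub]
  -- Fubini on the box
  have hm : Continuous fun p : ℝ × ℝ => c + (Complex.polarCoord.symm p) := by
    simp only [Complex.polarCoord_symm_apply]
    fun_prop
  have hmaps : Set.MapsTo (fun p : ℝ × ℝ => c + (Complex.polarCoord.symm p))
      (Set.Icc (0:ℝ) r ×ˢ Set.Icc (-Real.pi) Real.pi) (closedBall c r) := by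
    rintro ⟨s, θ⟩ ⟨hs, _⟩
    simp only [mem_closedBall, Complex.dist_eq, add_sub_cancel_left]
    rw [Complex.norm_polarCoord_symm, _root_.abs_of_nonneg hs.1]
    exact hs.2
  have hcont : ContinuousOn h' (Set.Icc (0:ℝ) r ×ˢ Set.Icc (-Real.pi) Real.pi) := by
    apply ContinuousOn.smul continuous_fst.continuousOn
    exact (hg.continuousOn.mono hsub).comp hm.continuousOn hmaps
  have hinteg : IntegrableOn h' S volume := by
    apply (hcont.integrableOn_compact (isCompact_Icc.prod isCompact_Icc)).mono_set
    exact Set.prod_mono Set.Ioc_subset_Icc_self Set.Ioo_subset_Icc_self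
  rw [hS, Measure.volume_eq_prod] at hinteg ⊢
  rw [setIntegral_prod _ hinteg]
  -- inner integral
  have hinner : ∀ s ∈ Set.Ioc (0:ℝ) r,
      (∫ θ in Set.Ioo (-Real.pi) Real.pi, h' (s, θ)) = (s * (2 * Real.pi)) • g c := by
    intro s hs
    have hcirc : ∀ θ : ℝ, c + Complex.polarCoord.symm (s, θ) = circleMap c s θ := by
      intro θ
      rw [circleMap, Complex.exp_mul_I, Complex.polarCoord_symm_apply]
      push_cast
      ring
    have h1 : (∫ θ in Set.Ioo (-Real.pi) Real.pi, h' (s, θ))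
        = s • ∫ θ in Set.Ioo (-Real.pi) Real.pi, g (circleMap c s θ) := by
      simp only [hh', hcirc]
      rw [MeasureTheory.integral_smul]
    have h2 : (∫ θ in Set.Ioo (-Real.pi) Real.pi, g (circleMap c s θ))
        = ∫ θ in (-Real.pi)..Real.pi, g (circleMap c s θ) := by
      rw [intervalIntegral.integral_of_le (by linarith [Real.pi_pos]),
        MeasureTheory.integral_Ioc_eq_integral_Ioo]
    have hper : Function.Periodic (fun θ => g (circleMap c s θ)) (2 * Real.pi) :=
      (periodic_circleMap c s).comp g
    have h3 : (∫ θ in (-Real.pi)..Real.pi, g (circleMap c s θ))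
        = ∫ θ in (0:ℝ)..(2 * Real.pi), g (circleMap c s θ) := by
      have h := hper.intervalIntegral_add_eq (-Real.pi) 0
      rw [zero_add] at h
      calc (∫ θ in (-Real.pi)..Real.pi, g (circleMap c s θ))
          = ∫ θ in (-Real.pi)..(-Real.pi + 2 * Real.pi), g (circleMap c s θ) := by ring_nf
        _ = ∫ θ in (0:ℝ)..(2 * Real.pi), g (circleMap c s θ) := h
    have h4 := circle_mean hs.1 (hg.mono ((closedBall_subset_closedBall hs.2).trans hsub))
    rw [h1, h2, h3, h4, smul_smul]
  rw [setIntegral_congr_fun measurableSet_Ioc hinner, _root_.integral_smul_const]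
  have : (∫ s in Set.Ioc (0:ℝ) r, s * (2 * Real.pi)) = Real.pi * r ^ 2 := by
    rw [← intervalIntegral.integral_of_le hr.le]
    rw [intervalIntegral.integral_mul_const, integral_id]
    ring
  rw [this]



lemma polydisk_mean : ∀ {n : ℕ} (f : (Fin n → ℂ) → ℂ) (U : Set (Fin n → ℂ)),
    IsOpen U → DifferentiableOn ℂ f U → ∀ (z : Fin n → ℂ) (r : ℝ), 0 < r →
    (Set.univ.pi fun k => closedBall (z k) r) ⊆ U →
    ∫ w in Set.univ.pi fun k => closedBall (z k) r, f w = ((Real.pi * r ^ 2) ^ n) • f z := by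
  intro n
  induction n with
  | zero =>
    intro f U hU hf z r hr hsub
    have huniv : (Set.univ.pi fun k : Fin 0 => closedBall (z k) r) = Set.univ := by
      ext w; simp
    rw [huniv, Measure.restrict_univ]
    have : (volume : Measure (Fin 0 → ℂ)) Set.univ = 1 := by
      simp [MeasureTheory.volume_pi, Measure.pi_univ]
    rw [MeasureTheory.integral_unique, measureReal_def, this]
    simp only [ENNReal.toReal_one, pow_zero, one_smul]
    exact congrArg f (Subsingleton.elim _ _)
  | succ n ih =>
    intro f U hU hf z r hr hsub
    set e := MeasurableEquiv.piFinSuccAbove (fun _ : Fin (n+1) => ℂ) 0 with he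
    have hmp : MeasurePreserving e volume volume :=
      volume_preserving_piFinSuccAbove (fun _ : Fin (n+1) => ℂ) 0
    set z' : Fin n → ℂ := fun j => z j.succ with hz'
    set A := closedBall (z 0) r with hA
    set B := Set.univ.pi fun j : Fin n => closedBall (z' j) r with hB
    have hsymm : ∀ p : ℂ × (Fin n → ℂ), e.symm p = Fin.cons p.1 p.2 := by
      intro p
      simp [he, MeasurableEquiv.piFinSuccAbove, Fin.insertNth_zero, Fin.consEquiv]
    have happ : ∀ w : Fin (n+1) → ℂ, e w = (w 0, fun j => w j.succ) := by
      intro w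
      have ht : Fin.tail w = fun j => w j.succ := rfl
      simp [he, MeasurableEquiv.piFinSuccAbove, Fin.insertNthEquiv, ht]
    have hconsD : ∀ a ∈ A, ∀ b ∈ B,
        Fin.cons a b ∈ (Set.univ.pi fun k => closedBall (z k) r) := by
      intro a ha b hb
      intro k _
      refine Fin.cases ?_ (fun j => ?_) k
      · simpa [hA] using ha
      · simpa using hb j (Set.mem_univ j)
    have hpre : (Set.univ.pi fun k => closedBall (z k) r) = e ⁻¹' (A ×ˢ B) := by
      ext w
      simp only [Set.mem_preimage, happ, Set.mem_prod, Set.mem_pi, Set.mem_univ,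
        forall_true_left, hB, hA, true_implies]
      constructor
      · intro h
        exact ⟨h 0, fun j => h j.succ⟩
      · rintro ⟨h0, h1⟩ k
        refine Fin.cases h0 (fun j => h1 j) k
    have hstep1 : (∫ w in Set.univ.pi fun k => closedBall (z k) r, f w)
        = ∫ p in A ×ˢ B, f (e.symm p) := by
      rw [hpre]
      have := hmp.setIntegral_preimage_emb e.measurableEmbedding
        (fun p => f (e.symm p)) (A ×ˢ B)
      simpa using this
    -- continuity of the composed function
    have hcons_cont : Continuous fun p : ℂ × (Fin n → ℂ) => (Fin.cons p.1 p.2 : Fin (n+1) → ℂ) := by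
      apply continuous_pi
      intro i
      refine Fin.cases ?_ (fun j => ?_) i
      · simpa using continuous_fst
      · simp only [Fin.cons_succ]; exact (continuous_apply j).comp continuous_snd
    have hABcomp : IsCompact (A ×ˢ B) :=
      (isCompact_closedBall _ _).prod (isCompact_univ_pi fun j => isCompact_closedBall _ _)
    have hmapsAB : Set.MapsTo (fun p : ℂ × (Fin n → ℂ) => (Fin.cons p.1 p.2 : Fin (n+1) → ℂ))
        (A ×ˢ B) U := by
      rintro ⟨a, b⟩ ⟨ha, hb⟩
      exact hsub (hconsD a ha b hb)
    have hinteg : IntegrableOn (fun p : ℂ × (Fin n → ℂ) => f (e.symm p)) (A ×ˢ B) volume := by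
      have : ContinuousOn (fun p : ℂ × (Fin n → ℂ) => f (Fin.cons p.1 p.2)) (A ×ˢ B) :=
        hf.continuousOn.comp hcons_cont.continuousOn hmapsAB
      have h2 : ContinuousOn (fun p : ℂ × (Fin n → ℂ) => f (e.symm p)) (A ×ˢ B) := by
        simpa only [hsymm] using this
      exact h2.integrableOn_compact hABcomp
    rw [hstep1]
    rw [Measure.volume_eq_prod] at hinteg ⊢
    rw [setIntegral_prod _ hinteg]
    -- inner integral via induction hypothesis
    have hinner : ∀ a ∈ A, (∫ b in B, f (e.symm (a, b)))
        = ((Real.pi * r ^ 2) ^ n) • f (Fin.cons a z') := by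
      intro a ha
      have hca : Continuous fun b : Fin n → ℂ => (Fin.cons a b : Fin (n+1) → ℂ) := by
        apply continuous_pi
        intro i
        refine Fin.cases ?_ (fun j => ?_) i
        · simpa using continuous_const
        · simpa using continuous_apply j
      have hda : Differentiable ℂ fun b : Fin n → ℂ => (Fin.cons a b : Fin (n+1) → ℂ) := by
        rw [differentiable_pi]
        intro i
        refine Fin.cases ?_ (fun j => ?_) i
        · simpa using differentiable_const a
        · simpa using differentiable_pi.mp differentiable_id j
      set V := (fun b : Fin n → ℂ => (Fin.cons a b : Fin (n+1) → ℂ)) ⁻¹' U with hV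
      have hVopen : IsOpen V := hU.preimage hca
      have hVdiff : DifferentiableOn ℂ (fun b => f (Fin.cons a b)) V :=
        hf.comp hda.differentiableOn (Set.mapsTo_preimage _ _)
      have hBV : B ⊆ V := fun b hb => hsub (hconsD a ha b hb)
      have := ih (fun b => f (Fin.cons a b)) V hVopen hVdiff z' r hr hBV
      simp only [hsymm]
      exact this
    rw [setIntegral_congr_fun (by measurability) hinner, MeasureTheory.integral_smul]
    -- outer integral via one-variable mean value
    have hcz : Continuous fun a : ℂ => (Fin.cons a z' : Fin (n+1) → ℂ) := by
      apply continuous_pi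
      intro i
      refine Fin.cases ?_ (fun j => ?_) i
      · simp only [Fin.cons_zero]; exact continuous_id
      · simpa using continuous_const
    have hdz : Differentiable ℂ fun a : ℂ => (Fin.cons a z' : Fin (n+1) → ℂ) := by
      rw [differentiable_pi]
      intro i
      refine Fin.cases ?_ (fun j => ?_) i
      · simpa using differentiable_id
      · simpa using differentiable_const (z' j)
    set W := (fun a : ℂ => (Fin.cons a z' : Fin (n+1) → ℂ)) ⁻¹' U with hW
    have hWopen : IsOpen W := hU.preimage hcz
    have hWdiff : DifferentiableOn ℂ (fun a => f (Fin.cons a z')) W :=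
      hf.comp hdz.differentiableOn (Set.mapsTo_preimage _ _)
    have hz'B : z' ∈ B := by
      intro j _
      simp
      exact hr.le
    have hAW : A ⊆ W := fun a ha => hsub (hconsD a ha z' hz'B)
    have houter := disk_mean hWopen hWdiff hr hAW
    rw [hA, houter]
    have hzc : (Fin.cons (z 0) z' : Fin (n+1) → ℂ) = z := by
      ext i
      refine Fin.cases ?_ (fun j => ?_) i <;> simp [hz']
    rw [hzc, smul_smul, ← pow_succ]


lemma cauchy_schwarz_on {n : ℕ} {D : Set (Fin n → ℂ)} (hDm : MeasurableSet D)
    (hDc : IsCompact D) {φ ψ : (Fin n → ℂ) → ℝ} (hφ : ContinuousOn φ D)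
    (hψ : ContinuousOn ψ D) (hφ0 : ∀ x ∈ D, 0 ≤ φ x) (hψ0 : ∀ x ∈ D, 0 ≤ ψ x) :
    (∫ x in D, φ x * ψ x) ^ 2 ≤ (∫ x in D, φ x ^ 2) * (∫ x in D, ψ x ^ 2) := by
  haveI : IsFiniteMeasure (volume.restrict D) :=
    ⟨by rw [Measure.restrict_apply_univ]; exact hDc.measure_lt_top⟩
  have hconj : (2:ℝ).HolderConjugate 2 := Real.HolderConjugate.two_two
  obtain ⟨C, hC⟩ := hDc.exists_bound_of_continuousOn hφ
  obtain ⟨C', hC'⟩ := hDc.exists_bound_of_continuousOn hψ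
  have mφ : MemLp φ (ENNReal.ofReal 2) (volume.restrict D) :=
    MemLp.of_bound (hφ.aestronglyMeasurable hDm) C ((ae_restrict_mem hDm).mono hC)
  have mψ : MemLp ψ (ENNReal.ofReal 2) (volume.restrict D) :=
    MemLp.of_bound (hψ.aestronglyMeasurable hDm) C' ((ae_restrict_mem hDm).mono hC')
  have h := integral_mul_le_Lp_mul_Lq_of_nonneg hconj
    ((ae_restrict_mem hDm).mono hφ0) ((ae_restrict_mem hDm).mono hψ0) mφ mψ
  have hrpow : ∀ x : ℝ, x ^ (2:ℝ) = x ^ 2 := by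
    intro x
    rw [← Real.rpow_natCast x 2]
    norm_num
  simp_rw [hrpow] at h
  have hφ2 : 0 ≤ ∫ x in D, φ x ^ 2 := integral_nonneg fun x => sq_nonneg _
  have hψ2 : 0 ≤ ∫ x in D, ψ x ^ 2 := integral_nonneg fun x => sq_nonneg _
  have hlhs : 0 ≤ ∫ x in D, φ x * ψ x :=
    setIntegral_nonneg hDm fun x hx => mul_nonneg (hφ0 x hx) (hψ0 x hx)
  calc (∫ x in D, φ x * ψ x) ^ 2
      ≤ ((∫ x in D, φ x ^ 2) ^ ((1:ℝ)/2) * (∫ x in D, ψ x ^ 2) ^ ((1:ℝ)/2)) ^ 2 := by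
        apply pow_le_pow_left₀ hlhs h
    _ = (∫ x in D, φ x ^ 2) * (∫ x in D, ψ x ^ 2) := by
        rw [mul_pow, ← Real.rpow_natCast ((∫ x in D, φ x ^ 2) ^ ((1:ℝ)/2)) 2,
          ← Real.rpow_natCast ((∫ x in D, ψ x ^ 2) ^ ((1:ℝ)/2)) 2,
          ← Real.rpow_mul hφ2, ← Real.rpow_mul hψ2]
        norm_num

/-- Continuity of point evaluation on a weighted L² space of holomorphic functions:
if `f` is holomorphic on an open set `M ⊆ ℂⁿ`, the closed polydisk of radius `r`
around `z` is contained in `M`, and `∫_M |f|² K⁻¹ δ dμ_L < ∞`, then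
`|f z|² ≤ (π r²)^(−2n) (∫_M |f|² K⁻¹ δ dμ_L) (∫_{D̄_r(z)} K δ⁻¹ dμ_L)`. -/
theorem eval_continuous_weighted_bergman {n : ℕ} (M : Set (Fin n → ℂ))
    (hM : IsOpen M) (f : (Fin n → ℂ) → ℂ) (hf : DifferentiableOn ℂ f M)
    (K δ : (Fin n → ℂ) → ℝ) (hK : ContinuousOn K M) (hδ : ContinuousOn δ M)
    (hKpos : ∀ x ∈ M, 0 < K x) (hδpos : ∀ x ∈ M, 0 < δ x)
    (z : Fin n → ℂ) (hz : z ∈ M) (r : ℝ) (hr : 0 < r)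
    (hD : {w : Fin n → ℂ | ∀ k, ‖w k - z k‖ ≤ r} ⊆ M)
    (hint : IntegrableOn (fun w => ‖f w‖ ^ 2 * (K w)⁻¹ * δ w) M volume) :
    ‖f z‖ ^ 2 ≤ ((Real.pi * r ^ 2) ^ (2 * n))⁻¹
        * (∫ w in M, ‖f w‖ ^ 2 * (K w)⁻¹ * δ w)
        * (∫ w in {w : Fin n → ℂ | ∀ k, ‖w k - z k‖ ≤ r},
            K w * (δ w)⁻¹) := by
  set D : Set (Fin n → ℂ) := {w | ∀ k, ‖w k - z k‖ ≤ r} with hDdef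
  have hDeq : D = Set.univ.pi fun k => closedBall (z k) r := by
    ext w
    simp [hDdef, Set.mem_pi, Complex.dist_eq]
  have hDc : IsCompact D := by
    rw [hDeq]; exact isCompact_univ_pi fun k => isCompact_closedBall _ _
  have hDm : MeasurableSet D := hDc.measurableSet
  have hDM : D ⊆ M := hD
  have hmean : ∫ w in D, f w = ((Real.pi * r ^ 2) ^ n) • f z := by
    rw [hDeq]
    exact polydisk_mean f M hM hf z r hr (hDeq ▸ hDM)
  set φ : (Fin n → ℂ) → ℝ := fun w => ‖f w‖ * Real.sqrt ((K w)⁻¹ * δ w) with hφdef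
  set ψ : (Fin n → ℂ) → ℝ := fun w => Real.sqrt (K w * (δ w)⁻¹) with hψdef
  have hφcont : ContinuousOn φ D := by
    apply ContinuousOn.mul ((hf.continuousOn.mono hDM).norm)
    exact Real.continuous_sqrt.comp_continuousOn
      (((hK.mono hDM).inv₀ fun x hx => (hKpos x (hDM hx)).ne').mul (hδ.mono hDM))
  have hψcont : ContinuousOn ψ D :=
    Real.continuous_sqrt.comp_continuousOn
      ((hK.mono hDM).mul ((hδ.mono hDM).inv₀ fun x hx => (hδpos x (hDM hx)).ne'))
  have hφ0 : ∀ x ∈ D, 0 ≤ φ x := fun x _ => mul_nonneg (norm_nonneg _) (Real.sqrt_nonneg _)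
  have hψ0 : ∀ x ∈ D, 0 ≤ ψ x := fun x _ => Real.sqrt_nonneg _
  have hmulid : ∀ x ∈ D, φ x * ψ x = ‖f x‖ := by
    intro x hx
    have hKx := hKpos x (hDM hx)
    have hδx := hδpos x (hDM hx)
    rw [hφdef, hψdef]
    simp only
    rw [mul_assoc, ← Real.sqrt_mul (by positivity)]
    rw [show (K x)⁻¹ * δ x * (K x * (δ x)⁻¹) = 1 by field_simp]
    simp
  have hφsq : ∀ x ∈ D, φ x ^ 2 = ‖f x‖ ^ 2 * (K x)⁻¹ * δ x := by
    intro x hx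
    have hKx := hKpos x (hDM hx)
    have hδx := hδpos x (hDM hx)
    rw [hφdef]
    simp only
    rw [mul_pow, Real.sq_sqrt (by positivity), mul_assoc]
  have hψsq : ∀ x ∈ D, ψ x ^ 2 = K x * (δ x)⁻¹ := by
    intro x hx
    have hKx := hKpos x (hDM hx)
    have hδx := hδpos x (hDM hx)
    rw [hψdef]
    simp only
    rw [Real.sq_sqrt (by positivity)]
  have hpir : (0:ℝ) < Real.pi * r ^ 2 := by positivity
  have h1 : ‖f z‖ * (Real.pi * r ^ 2) ^ n ≤ ∫ x in D, ‖f x‖ := by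
    calc ‖f z‖ * (Real.pi * r ^ 2) ^ n
        = ‖((Real.pi * r ^ 2) ^ n : ℝ) • f z‖ := by
          rw [norm_smul, Real.norm_of_nonneg (pow_nonneg hpir.le n)]
          ring
      _ = ‖∫ w in D, f w‖ := by rw [hmean]
      _ ≤ ∫ x in D, ‖f x‖ := norm_integral_le_integral_norm _
  have h2 : (∫ x in D, ‖f x‖) = ∫ x in D, φ x * ψ x :=
    (setIntegral_congr_fun hDm hmulid).symm
  have h3 := cauchy_schwarz_on hDm hDc hφcont hψcont hφ0 hψ0
  have h4a : (∫ x in D, φ x ^ 2) = ∫ x in D, ‖f x‖ ^ 2 * (K x)⁻¹ * δ x :=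
    setIntegral_congr_fun hDm hφsq
  have h4b : (∫ x in D, ‖f x‖ ^ 2 * (K x)⁻¹ * δ x) ≤ ∫ w in M, ‖f w‖ ^ 2 * (K w)⁻¹ * δ w := by
    apply setIntegral_mono_set hint
    · exact (ae_restrict_mem hM.measurableSet).mono fun x hx => by
        have := (hKpos x hx).le
        have := (hδpos x hx).le
        positivity
    · exact HasSubset.Subset.eventuallyLE hDM
  have h5 : (∫ x in D, ψ x ^ 2) = ∫ x in D, K x * (δ x)⁻¹ :=
    setIntegral_congr_fun hDm hψsq
  have hBnn : 0 ≤ ∫ x in D, K x * (δ x)⁻¹ :=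
    setIntegral_nonneg hDm fun x hx => by
      have := (hKpos x (hDM hx)).le
      have := (hδpos x (hDM hx)).le
      positivity
  have hP : (0:ℝ) < (Real.pi * r ^ 2) ^ (2 * n) := pow_pos hpir _
  rw [show ((Real.pi * r ^ 2) ^ (2 * n))⁻¹ * (∫ w in M, ‖f w‖ ^ 2 * (K w)⁻¹ * δ w)
      * (∫ w in D, K w * (δ w)⁻¹)
      = ((∫ w in M, ‖f w‖ ^ 2 * (K w)⁻¹ * δ w) * (∫ w in D, K w * (δ w)⁻¹))
        / (Real.pi * r ^ 2) ^ (2 * n) by ring]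
  rw [le_div_iff₀ hP]
  calc ‖f z‖ ^ 2 * (Real.pi * r ^ 2) ^ (2 * n)
      = (‖f z‖ * (Real.pi * r ^ 2) ^ n) ^ 2 := by
        rw [Nat.mul_comm 2 n, pow_mul, ← mul_pow]
    _ ≤ (∫ x in D, ‖f x‖) ^ 2 := by
        apply pow_le_pow_left₀ (by positivity) h1
    _ = (∫ x in D, φ x * ψ x) ^ 2 := by rw [h2]
    _ ≤ (∫ x in D, φ x ^ 2) * (∫ x in D, ψ x ^ 2) := h3
    _ ≤ (∫ w in M, ‖f w‖ ^ 2 * (K w)⁻¹ * δ w) * (∫ w in D, K w * (δ w)⁻¹) := by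
        rw [h4a, h5]
        exact mul_le_mul_of_nonneg_right h4b hBnn

end EvalAux
end

section
/- Fix γ > 0 and let g = [a₁,a₂,a₃] be an element of the Heisenberg group, with a₁, a₂, a₃ ∈ ℝ. For w ∈ ℂ set α(g⁻¹, w) = exp(i a₃ γ + (1/4)(−a₂ − a₁ i)(−2w + γ(a₂ − a₁ i))) and g⁻¹·w = w − γ(a₂ − i a₁). Then for every z ∈ ℂ, e^{−|z|²/(2γ)} · (2πγ)⁻¹ ∫_ℂ α(g⁻¹, w) · exp(conj(z)(g⁻¹·w)/(2γ)) · exp(z · conj(w)/(2γ)) · e^{−|w|²/(2γ)} dA(w) = exp(i γ a₃ − (γ/4)(a₁² + a₂²) + (1/2)(a₂ + i a₁) z + (1/2)(−a₂ + i a₁) conj(z)). (This is the Berezin symbol formula S_γ(π_γ(g))(z) for the Bargmann–Fock representation of the Heisenberg group.) -/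
open MeasureTheory

/-- Berezin symbol of the Bargmann–Fock representation of the Heisenberg group:
for `g = [a₁,a₂,a₃]`, with `α(g⁻¹,w) = exp(i a₃ γ + (1/4)(−a₂−a₁i)(−2w + γ(a₂−a₁i)))`
and `g⁻¹·w = w − γ(a₂ − ia₁)`,
`S_γ(π_γ(g))(z) = exp(iγa₃ − (γ/4)(a₁²+a₂²) + (1/2)(a₂+ia₁)z + (1/2)(−a₂+ia₁) conj z)`. -/
theorem heisenberg_berezin_symbol (γ a₁ a₂ a₃ : ℝ) (hγ : 0 < γ) (z : ℂ) :
    ((Real.exp (-‖z‖ ^ 2 / (2 * γ)) * (2 * Real.pi * γ)⁻¹ : ℝ) : ℂ)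
        * ∫ w : ℂ,
            Complex.exp (Complex.I * a₃ * γ
                + (1 / 4) * (-(a₂ : ℂ) - (a₁ : ℂ) * Complex.I)
                  * (-2 * w + (γ : ℂ) * ((a₂ : ℂ) - (a₁ : ℂ) * Complex.I)))
              * Complex.exp ((starRingEnd ℂ) z
                  * (w - (γ : ℂ) * ((a₂ : ℂ) - Complex.I * (a₁ : ℂ))) / (2 * γ))
              * Complex.exp (z * (starRingEnd ℂ) w / (2 * γ))
              * ((Real.exp (-‖w‖ ^ 2 / (2 * γ)) : ℝ) : ℂ)
      = Complex.exp (Complex.I * γ * a₃ - ((γ : ℂ) / 4) * ((a₁ : ℂ) ^ 2 + (a₂ : ℂ) ^ 2)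
          + (1 / 2) * ((a₂ : ℂ) + Complex.I * a₁) * z
          + (1 / 2) * (-(a₂ : ℂ) + Complex.I * a₁) * (starRingEnd ℂ) z) := by
  have hγ' : (γ : ℂ) ≠ 0 := Complex.ofReal_ne_zero.mpr hγ.ne'
  set ζ : ℂ := (starRingEnd ℂ) z with hζ
  set B : ℂ := (1/2) * ((a₂ : ℂ) + (a₁ : ℂ) * Complex.I) + ζ / (2*γ) with hB
  set C : ℂ := z / (2*γ) with hC
  set A : ℂ := Complex.I * a₃ * γ
      + (1/4) * (-(a₂ : ℂ) - (a₁ : ℂ) * Complex.I) * ((γ : ℂ) * ((a₂ : ℂ) - (a₁ : ℂ) * Complex.I))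
      - ζ * ((γ : ℂ) * ((a₂ : ℂ) - Complex.I * a₁)) / (2*γ) with hA
  have hb : (-(1/(2*(γ:ℂ)))).re < 0 := by
    simp only [← Complex.ofReal_ofNat, ← Complex.ofReal_mul, ← Complex.ofReal_one,
      ← Complex.ofReal_div, ← Complex.ofReal_neg, Complex.ofReal_re, neg_lt, neg_zero]
    positivity
  -- rewrite the complex integral as an integral over ℝ × ℝ
  rw [← (Complex.volume_preserving_equiv_real_prod.symm).integral_comp
    Complex.measurableEquivRealProd.symm.measurableEmbedding]
  have hpt : ∀ p : ℝ × ℝ,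
      (Complex.exp (Complex.I * a₃ * γ
          + (1 / 4) * (-(a₂ : ℂ) - (a₁ : ℂ) * Complex.I)
            * (-2 * (Complex.measurableEquivRealProd.symm p) + (γ : ℂ) * ((a₂ : ℂ) - (a₁ : ℂ) * Complex.I)))
        * Complex.exp (ζ * ((Complex.measurableEquivRealProd.symm p) - (γ : ℂ) * ((a₂ : ℂ) - Complex.I * (a₁ : ℂ))) / (2 * γ))
        * Complex.exp (z * (starRingEnd ℂ) (Complex.measurableEquivRealProd.symm p) / (2 * γ))
        * ((Real.exp (-‖Complex.measurableEquivRealProd.symm p‖ ^ 2 / (2 * γ)) : ℝ) : ℂ))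
      = Complex.exp (-(1/(2*(γ:ℂ))) * (p.1:ℂ)^2 + (B + C) * p.1 + 0)
        * Complex.exp (-(1/(2*(γ:ℂ))) * (p.2:ℂ)^2 + (Complex.I * (B - C)) * p.2 + A) := by
    intro p
    have hw : Complex.measurableEquivRealProd.symm p = (p.1 : ℂ) + (p.2 : ℂ) * Complex.I := by
      rw [Complex.measurableEquivRealProd_symm_apply]
      exact (Complex.mk_eq_add_mul_I p.1 p.2)
    rw [hw]
    have habs : ‖(p.1 : ℂ) + (p.2 : ℂ) * Complex.I‖ ^ 2 = p.1^2 + p.2^2 := by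
      rw [Complex.sq_norm, Complex.normSq_add_mul_I]
    rw [habs]
    have hconj : (starRingEnd ℂ) ((p.1 : ℂ) + (p.2 : ℂ) * Complex.I)
        = (p.1 : ℂ) - (p.2 : ℂ) * Complex.I := by
      simp [map_add, map_mul, Complex.conj_ofReal, Complex.conj_I]
      ring
    rw [hconj, Complex.ofReal_exp, ← Complex.exp_add, ← Complex.exp_add, ← Complex.exp_add,
      ← Complex.exp_add]
    congr 1
    rw [hB, hC, hA]
    push_cast
    ring
  simp only [hpt]
  rw [MeasureTheory.Measure.volume_eq_prod,
    MeasureTheory.integral_prod_mul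
      (fun s : ℝ => Complex.exp (-(1/(2*(γ:ℂ))) * (s:ℂ)^2 + (B + C) * s + 0))
      (fun t : ℝ => Complex.exp (-(1/(2*(γ:ℂ))) * (t:ℂ)^2 + (Complex.I * (B - C)) * t + A)),
    integral_cexp_quadratic hb, integral_cexp_quadratic hb]
  have h2πγ : (2 * (Real.pi : ℂ) * γ) ≠ 0 := by
    have h : (2 * Real.pi * γ : ℝ) ≠ 0 := by positivity
    exact_mod_cast h
  have hval : ((Real.pi : ℂ) / -(-(1/(2*(γ:ℂ))))) = ((Real.pi / (1/(2*γ)) : ℝ) : ℂ) := by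
    push_cast
    rw [neg_neg]
  have hrne : (Real.pi / (1/(2*γ)) : ℝ) ≠ 0 := by positivity
  have hpow : ((Real.pi : ℂ) / -(-(1/(2*(γ:ℂ))))) ^ ((1:ℂ)/2)
      * ((Real.pi : ℂ) / -(-(1/(2*(γ:ℂ))))) ^ ((1:ℂ)/2) = 2 * Real.pi * γ := by
    rw [hval, ← Complex.cpow_add _ _ (Complex.ofReal_ne_zero.mpr hrne)]
    norm_num
    field_simp
  have hz : ((‖z‖ : ℝ) : ℂ)^2 = z * ζ := by
    rw [← Complex.ofReal_pow, Complex.sq_norm, ← Complex.mul_conj]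
  push_cast [Complex.ofReal_exp]
  rw [show ∀ u v x y : ℂ, Complex.exp u * (2 * (Real.pi:ℂ) * γ)⁻¹ * (x * Complex.exp v * (y * Complex.exp (A - (Complex.I*(B-C))^2 / (4 * -(1/(2*(γ:ℂ)))))))
      = (x * y) * (2 * (Real.pi:ℂ) * γ)⁻¹ * (Complex.exp u * Complex.exp v * Complex.exp (A - (Complex.I*(B-C))^2 / (4 * -(1/(2*(γ:ℂ)))))) from fun u v x y => by ring,
    hpow, mul_inv_cancel₀ h2πγ, one_mul, ← Complex.exp_add, ← Complex.exp_add]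
  congr 1
  have h4 : (4:ℂ) * -(1/(2*(γ:ℂ))) = -2/γ := by
    field_simp
    ring
  have hdiv : ∀ E : ℂ, E / (4 * -(1/(2*(γ:ℂ)))) = -(E * γ) / 2 := by
    intro E
    rw [h4, div_div_eq_mul_div]
    ring
  have hg : (γ:ℂ)/(2*γ) = 1/2 := by
    rw [div_eq_div_iff (mul_ne_zero two_ne_zero hγ') two_ne_zero]
    ring
  have h2g : (2*(γ:ℂ)) * (2*(γ:ℂ))⁻¹ = 1 := mul_inv_cancel₀ (mul_ne_zero two_ne_zero hγ')
  have hsq : (Complex.I*(B-C))^2 = -((B-C)^2) := by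
    rw [mul_pow, Complex.I_sq]
    ring
  have hbc : 2*(γ:ℂ)*(B*C) = (1/2)*((a₂:ℂ)+(a₁:ℂ)*Complex.I)*z + ζ*z/(2*γ) := by
    rw [hB, hC]
    linear_combination (((a₂:ℂ)+(a₁:ℂ)*Complex.I)*z) * hg + (ζ*z/(2*γ)) * h2g
  have hAe : A = Complex.I*(a₃:ℂ)*γ - ((γ:ℂ)/4)*((a₁:ℂ)^2+(a₂:ℂ)^2)
      - ζ*((a₂:ℂ) - Complex.I*(a₁:ℂ))/2 := by
    rw [hA]
    linear_combination ((γ:ℂ)/4*(a₁:ℂ)^2) * Complex.I_sq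
      - (ζ*((a₂:ℂ) - Complex.I*(a₁:ℂ))) * hg
  rw [hz, hsq, hdiv, hdiv, hAe]
  linear_combination hbc
end

section
/- Fix γ > 0 and a₁, a₂, a₃ ∈ ℝ with (a₁, a₂) ≠ (0, 0). For each integer n > 2 set r(n) = √(2γ/n), R(n) = (1/2) r(n) (a₁² + a₂² − r(n)² a₃²)^{1/2} (real for n large), α_n = cosh R(n) − i r(n)² a₃ · sinh R(n)/(2 R(n)), and β_n = r(n)(a₂ − i a₁) · sinh R(n)/(2 R(n)). Then for every z ∈ ℂ, lim_{n→∞} (α_n − conj(α_n)·|z|²/(2γn) − conj(β_n)·z/√(2γn) + β_n·conj(z)/√(2γn))^{−n} · (1 − |z|²/(2γn))^{n} = exp(−(γ/4)(a₁² + a₂²) + i γ a₃ + (1/2)(a₂ + i a₁) z − (1/2)(a₂ − i a₁) conj(z)). (This is the contraction of the Berezin symbols S_n(π_n(g_n))(z/√(2γn)) of the holomorphic discrete series of SU(1,1) to the symbol of the Heisenberg representation π_γ, where g_n = exp_{SU(1,1)}(C_{r(n)}(a₁v₁+a₂v₂+a₃v₃)) = g(α_n, β_n).) -/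
open Filter

private lemma aux_sinh_div_self :
    Tendsto (fun x : ℝ => Real.sinh x / x) (nhdsWithin 0 {(0:ℝ)}ᶜ) (nhds 1) := by
  have h := Real.hasDerivAt_sinh 0
  rw [hasDerivAt_iff_tendsto_slope] at h
  have heq : slope Real.sinh 0 = fun x : ℝ => Real.sinh x / x := by
    funext x
    simp [slope_def_field, Real.sinh_zero]
  rw [heq, Real.cosh_zero] at h
  exact h

set_option maxHeartbeats 1000000 in
/-- Contraction of the Berezin symbols of the holomorphic discrete series of `SU(1,1)`
to the symbol of the Heisenberg representation `π_γ`: with `r(n) = √(2γ/n)`,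
`R(n) = (1/2) r(n) √(a₁² + a₂² − r(n)² a₃²)`,
`α_n = cosh R(n) − i r(n)² a₃ sinh R(n)/(2R(n))`,
`β_n = r(n)(a₂ − i a₁) sinh R(n)/(2R(n))`, one has
`lim_n S_n(π_n(g(α_n,β_n)))(z/√(2γn))
  = exp(−(γ/4)(a₁²+a₂²) + iγa₃ + (1/2)(a₂+ia₁)z − (1/2)(a₂−ia₁) conj z)`. -/
theorem su11_contraction_of_berezin_symbols (γ a₁ a₂ a₃ : ℝ) (hγ : 0 < γ)
    (ha : (a₁, a₂) ≠ (0, 0))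
    (r R : ℕ → ℝ) (α β : ℕ → ℂ)
    (hr : ∀ n : ℕ, r n = Real.sqrt (2 * γ / n))
    (hR : ∀ n : ℕ, R n = (1 / 2) * r n * Real.sqrt (a₁ ^ 2 + a₂ ^ 2 - (r n) ^ 2 * a₃ ^ 2))
    (hα : ∀ n : ℕ, α n = ((Real.cosh (R n) : ℝ) : ℂ)
      - Complex.I * ((r n : ℝ) : ℂ) ^ 2 * (a₃ : ℂ)
        * ((Real.sinh (R n) / (2 * R n) : ℝ) : ℂ))
    (hβ : ∀ n : ℕ, β n = ((r n : ℝ) : ℂ) * ((a₂ : ℂ) - Complex.I * (a₁ : ℂ))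
        * ((Real.sinh (R n) / (2 * R n) : ℝ) : ℂ))
    (z : ℂ) :
    Tendsto (fun n : ℕ =>
        (α n - (starRingEnd ℂ) (α n) * ((‖z‖ ^ 2 : ℝ) : ℂ)
              / (2 * (γ : ℂ) * (n : ℂ))
            - (starRingEnd ℂ) (β n) * z / ((Real.sqrt (2 * γ * n) : ℝ) : ℂ)
            + β n * (starRingEnd ℂ) z / ((Real.sqrt (2 * γ * n) : ℝ) : ℂ)) ^ (-(n : ℤ))
          * (((1 - ‖z‖ ^ 2 / (2 * γ * n) : ℝ) : ℂ)) ^ (n : ℕ))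
      atTop
      (nhds (Complex.exp (-(((γ : ℂ)) / 4) * ((a₁ : ℂ) ^ 2 + (a₂ : ℂ) ^ 2)
        + Complex.I * (γ : ℂ) * (a₃ : ℂ)
        + (1 / 2) * ((a₂ : ℂ) + Complex.I * (a₁ : ℂ)) * z
        - (1 / 2) * ((a₂ : ℂ) - Complex.I * (a₁ : ℂ)) * (starRingEnd ℂ) z))) := by
  classical
  -- notation
  set L : ℂ := -(((γ : ℂ)) / 4) * ((a₁ : ℂ) ^ 2 + (a₂ : ℂ) ^ 2)
        + Complex.I * (γ : ℂ) * (a₃ : ℂ)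
        + (1 / 2) * ((a₂ : ℂ) + Complex.I * (a₁ : ℂ)) * z
        - (1 / 2) * ((a₂ : ℂ) - Complex.I * (a₁ : ℂ)) * (starRingEnd ℂ) z with hLdef
  set A : ℕ → ℂ := fun n =>
      α n - (starRingEnd ℂ) (α n) * ((‖z‖ ^ 2 : ℝ) : ℂ)
              / (2 * (γ : ℂ) * (n : ℂ))
            - (starRingEnd ℂ) (β n) * z / ((Real.sqrt (2 * γ * n) : ℝ) : ℂ)
            + β n * (starRingEnd ℂ) z / ((Real.sqrt (2 * γ * n) : ℝ) : ℂ) with hAdef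
  set B : ℕ → ℂ := fun n => (((1 - ‖z‖ ^ 2 / (2 * γ * n) : ℝ) : ℂ)) with hBdef
  have hP : 0 < a₁ ^ 2 + a₂ ^ 2 := by
    have h : a₁ ≠ 0 ∨ a₂ ≠ 0 := by
      by_contra h
      push_neg at h
      exact ha (by simp [h.1, h.2])
    rcases h with h | h <;> positivity
  -- elementary real limits
  have h2γn : Tendsto (fun n : ℕ => 2 * γ / n) atTop (nhds 0) :=
    tendsto_const_div_atTop_nhds_zero_nat (2 * γ)
  have hr0 : Tendsto r atTop (nhds 0) := by
    have h := (Real.continuous_sqrt.tendsto 0).comp h2γn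
    refine Tendsto.congr (fun n => (hr n).symm) ?_
    simpa only [Function.comp_def, Real.sqrt_zero] using h
  have hinner : Tendsto (fun n : ℕ => a₁ ^ 2 + a₂ ^ 2 - (r n) ^ 2 * a₃ ^ 2) atTop
      (nhds (a₁ ^ 2 + a₂ ^ 2)) := by
    have h : Tendsto (fun n : ℕ => (r n) ^ 2 * a₃ ^ 2) atTop (nhds 0) := by
      simpa using ((hr0.pow 2).mul_const (a₃ ^ 2))
    simpa using tendsto_const_nhds.sub h
  have hR0 : Tendsto R atTop (nhds 0) := by
    have h1 : Tendsto (fun n : ℕ => Real.sqrt (a₁ ^ 2 + a₂ ^ 2 - (r n) ^ 2 * a₃ ^ 2)) atTop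
        (nhds (Real.sqrt (a₁ ^ 2 + a₂ ^ 2))) :=
      (Real.continuous_sqrt.tendsto _).comp hinner
    have h2 := ((tendsto_const_nhds (x := (1/2 : ℝ))).mul hr0).mul h1
    refine Tendsto.congr (fun n => (hR n).symm) ?_
    simpa using h2
  -- the set of "good" indices
  have hgood : ∀ᶠ n : ℕ in atTop, 0 < (n : ℝ) ∧ 0 < r n ∧ (r n) ^ 2 = 2 * γ / n
      ∧ 0 < a₁ ^ 2 + a₂ ^ 2 - (r n) ^ 2 * a₃ ^ 2 ∧ 0 < R n := by
    filter_upwards [eventually_ge_atTop 1, hinner.eventually (eventually_gt_nhds hP)]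
      with n hn hpos
    have hn0 : 0 < (n : ℝ) := by exact_mod_cast hn
    have h2 : 0 < 2 * γ / n := by positivity
    have hrpos : 0 < r n := by rw [hr]; exact Real.sqrt_pos.2 h2
    have hr2 : (r n) ^ 2 = 2 * γ / n := by rw [hr]; exact Real.sq_sqrt h2.le
    refine ⟨hn0, hrpos, hr2, hpos, ?_⟩
    rw [hR]
    have h3 := Real.sqrt_pos.2 hpos
    have : (0:ℝ) < 1/2 := by norm_num
    exact mul_pos (mul_pos this hrpos) h3
  have hRne : ∀ᶠ n : ℕ in atTop, R n ≠ 0 := hgood.mono fun n h => h.2.2.2.2.ne'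
  have hRnhds : Tendsto R atTop (nhdsWithin 0 {(0:ℝ)}ᶜ) := by
    rw [tendsto_nhdsWithin_iff]
    exact ⟨hR0, hRne.mono fun n h => h⟩
  -- sinh R / (2R) → 1/2
  have hs : Tendsto (fun n => Real.sinh (R n) / (2 * R n)) atTop (nhds (1/2 : ℝ)) := by
    have h1 := aux_sinh_div_self.comp hRnhds
    have h2 := h1.div_const 2
    refine Tendsto.congr (fun n => ?_) h2
    show Real.sinh (R n) / R n / 2 = Real.sinh (R n) / (2 * R n)
    ring
  have hsC : Tendsto (fun n => ((Real.sinh (R n) / (2 * R n) : ℝ) : ℂ)) atTop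
      (nhds (((1/2 : ℝ) : ℂ))) := (Complex.continuous_ofReal.tendsto _).comp hs
  -- sinh(R/2)/(R/2) → 1
  have hq : Tendsto (fun n => Real.sinh (R n / 2) / (R n / 2)) atTop (nhds 1) := by
    have hhalf : Tendsto (fun n => R n / 2) atTop (nhdsWithin 0 {(0:ℝ)}ᶜ) := by
      rw [tendsto_nhdsWithin_iff]
      constructor
      · simpa using hR0.div_const 2
      · exact hRne.mono fun n h => by simpa using h
    exact aux_sinh_div_self.comp hhalf
  -- n R² → (γ/2)(a₁²+a₂²)
  have hnR2 : Tendsto (fun n : ℕ => (n : ℝ) * (R n) ^ 2) atTop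
      (nhds (γ / 2 * (a₁ ^ 2 + a₂ ^ 2))) := by
    have hEq : ∀ᶠ n : ℕ in atTop,
        γ / 2 * (a₁ ^ 2 + a₂ ^ 2 - (2 * γ / n) * a₃ ^ 2) = (n : ℝ) * (R n) ^ 2 := by
      filter_upwards [hgood] with n ⟨hn0, hrpos, hr2, hpos, hRpos⟩
      rw [hR, mul_pow, mul_pow, Real.sq_sqrt hpos.le, hr2]
      have hn0' : (n:ℝ) ≠ 0 := hn0.ne'
      field_simp
    have hlim : Tendsto (fun n : ℕ => γ / 2 * (a₁ ^ 2 + a₂ ^ 2 - (2 * γ / n) * a₃ ^ 2)) atTop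
        (nhds (γ / 2 * (a₁ ^ 2 + a₂ ^ 2 - 0 * a₃ ^ 2))) :=
      tendsto_const_nhds.mul (tendsto_const_nhds.sub (h2γn.mul_const _))
    refine Tendsto.congr' hEq ?_
    simpa using hlim
  -- n (1 - cosh R) → -(γ/4)(a₁²+a₂²)
  have ht : Tendsto (fun n : ℕ => (n : ℝ) * (1 - Real.cosh (R n))) atTop
      (nhds (-(γ / 4 * (a₁ ^ 2 + a₂ ^ 2)))) := by
    have hEq : ∀ᶠ n : ℕ in atTop,
        -(((n : ℝ) * (R n) ^ 2) / 2 * (Real.sinh (R n / 2) / (R n / 2)) ^ 2)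
          = (n : ℝ) * (1 - Real.cosh (R n)) := by
      filter_upwards [hgood] with n ⟨hn0, hrpos, hr2, hpos, hRpos⟩
      have hcosh : Real.cosh (R n) = 1 + 2 * Real.sinh (R n / 2) ^ 2 := by
        rw [show R n = 2 * (R n / 2) by ring, Real.cosh_two_mul, Real.cosh_sq]
        ring
      rw [hcosh]
      have hRne' : R n ≠ 0 := hRpos.ne'
      field_simp
      ring
    have hlim := ((hnR2.div_const 2).mul (hq.pow 2)).neg
    refine Tendsto.congr' hEq ?_
    convert hlim using 2
    ring
  have htC : Tendsto (fun n : ℕ => (((n : ℝ) * (1 - Real.cosh (R n)) : ℝ) : ℂ)) atTop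
      (nhds ((-(γ / 4 * (a₁ ^ 2 + a₂ ^ 2)) : ℝ) : ℂ)) :=
    (Complex.continuous_ofReal.tendsto _).comp ht
  have hcoshlim : Tendsto (fun n => Real.cosh (R n)) atTop (nhds 1) := by
    have := (Real.continuous_cosh.tendsto 0).comp hR0
    simpa [Function.comp_def] using this
  -- α → 1, conj α → 1
  have hrC : Tendsto (fun n => ((r n : ℝ) : ℂ)) atTop (nhds 0) := by
    simpa [Function.comp_def] using (Complex.continuous_ofReal.tendsto 0).comp hr0
  have hαlim : Tendsto α atTop (nhds 1) := by
    have h1 : Tendsto (fun n => ((Real.cosh (R n) : ℝ) : ℂ)) atTop (nhds 1) := by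
      have := (Complex.continuous_ofReal.tendsto 1).comp hcoshlim
      simpa only [Function.comp_def, Complex.ofReal_one] using this
    have h2 : Tendsto (fun n => Complex.I * ((r n : ℝ) : ℂ) ^ 2 * (a₃ : ℂ)
        * ((Real.sinh (R n) / (2 * R n) : ℝ) : ℂ)) atTop (nhds 0) := by
      have := ((tendsto_const_nhds (x := Complex.I)).mul (hrC.pow 2)).mul_const ((a₃ : ℂ))
      have h3 := this.mul hsC
      simpa using h3
    refine Tendsto.congr (fun n => (hα n).symm) ?_
    simpa using h1.sub h2
  have hconjα : Tendsto (fun n => (starRingEnd ℂ) (α n)) atTop (nhds 1) := by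
    have := hαlim.star
    simpa only [starRingEnd_apply, star_one] using this
  -- the key limit: n (B n - A n) → L
  have hnd : Tendsto (fun n : ℕ => (n : ℂ) * (B n - A n)) atTop (nhds L) := by
    have hEq : ∀ᶠ n : ℕ in atTop,
        (((n : ℝ) * (1 - Real.cosh (R n)) : ℝ) : ℂ)
          + Complex.I * (2 * (γ : ℂ) * (a₃ : ℂ)) * ((Real.sinh (R n) / (2 * R n) : ℝ) : ℂ)
          + ((starRingEnd ℂ) (α n) - 1) * (((‖z‖ ^ 2 : ℝ) : ℂ) / (2 * (γ : ℂ)))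
          + ((Real.sinh (R n) / (2 * R n) : ℝ) : ℂ) * ((a₂ : ℂ) + Complex.I * (a₁ : ℂ)) * z
          - ((Real.sinh (R n) / (2 * R n) : ℝ) : ℂ) * ((a₂ : ℂ) - Complex.I * (a₁ : ℂ))
              * (starRingEnd ℂ) z
        = (n : ℂ) * (B n - A n) := by
      filter_upwards [hgood] with n ⟨hn0, hrpos, hr2, hpos, hRpos⟩
      have hn0' : (n : ℝ) ≠ 0 := hn0.ne'
      have hsqrt : Real.sqrt (2 * γ * n) = r n * n := by
        have h1 : (2 : ℝ) * γ * n = (2 * γ / n) * n ^ 2 := by field_simp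
        rw [h1, ← hr2, ← Real.sqrt_sq (by positivity : (0:ℝ) ≤ r n * n)]
        congr 1
        ring
      have hconjαn : (starRingEnd ℂ) (α n) = ((Real.cosh (R n) : ℝ) : ℂ)
          + Complex.I * ((r n : ℝ) : ℂ) ^ 2 * (a₃ : ℂ)
            * ((Real.sinh (R n) / (2 * R n) : ℝ) : ℂ) := by
        rw [hα n]
        simp only [map_sub, map_mul, map_pow, Complex.conj_ofReal, Complex.conj_I]
        ring
      have hconjβn : (starRingEnd ℂ) (β n) = ((r n : ℝ) : ℂ) * ((a₂ : ℂ) + Complex.I * (a₁ : ℂ))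
          * ((Real.sinh (R n) / (2 * R n) : ℝ) : ℂ) := by
        rw [hβ n]
        simp only [map_sub, map_mul, map_pow, Complex.conj_ofReal, Complex.conj_I]
        ring
      have hr2C : ((r n : ℝ) : ℂ) ^ 2 = 2 * (γ : ℂ) / (n : ℂ) := by
        rw [show ((r n : ℝ) : ℂ) ^ 2 = (((r n ^ 2 : ℝ)) : ℂ) by push_cast; ring, hr2]
        push_cast
        ring
      have hnC : ((n : ℝ) : ℂ) = (n : ℂ) := by push_cast; ring
      have hnne : (n : ℂ) ≠ 0 := by
        simpa using (by exact_mod_cast hn0' : ((n : ℝ) : ℂ) ≠ 0)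
      have hγne : (γ : ℂ) ≠ 0 := by exact_mod_cast hγ.ne'
      have hrne : ((r n : ℝ) : ℂ) ≠ 0 := by exact_mod_cast hrpos.ne'
      have hRneC : ((R n : ℝ) : ℂ) ≠ 0 := by exact_mod_cast hRpos.ne'
      have hconjαn' : (starRingEnd ℂ) (α n) = ((Real.cosh (R n) : ℝ) : ℂ)
          + Complex.I * (2 * (γ : ℂ) / (n : ℂ)) * (a₃ : ℂ)
            * ((Real.sinh (R n) / (2 * R n) : ℝ) : ℂ) := by
        rw [hconjαn, hr2C]
      have hαn' : α n = ((Real.cosh (R n) : ℝ) : ℂ)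
          - Complex.I * (2 * (γ : ℂ) / (n : ℂ)) * (a₃ : ℂ)
            * ((Real.sinh (R n) / (2 * R n) : ℝ) : ℂ) := by
        rw [hα n, hr2C]
      have hterm1 : (starRingEnd ℂ) (β n) * z / ((Real.sqrt (2 * γ * n) : ℝ) : ℂ)
          = ((a₂ : ℂ) + Complex.I * (a₁ : ℂ)) * ((Real.sinh (R n) / (2 * R n) : ℝ) : ℂ)
            * z / (n : ℂ) := by
        rw [hconjβn, hsqrt]
        push_cast
        field_simp
      have hterm2 : β n * (starRingEnd ℂ) z / ((Real.sqrt (2 * γ * n) : ℝ) : ℂ)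
          = ((a₂ : ℂ) - Complex.I * (a₁ : ℂ)) * ((Real.sinh (R n) / (2 * R n) : ℝ) : ℂ)
            * (starRingEnd ℂ) z / (n : ℂ) := by
        rw [hβ n, hsqrt]
        push_cast
        field_simp
      set sC : ℂ := ((Real.sinh (R n) / (2 * R n) : ℝ) : ℂ) with hsCdef
      set aZ : ℂ := ((‖z‖ ^ 2 : ℝ) : ℂ) with haZdef
      have hsplit : (n : ℂ) * (B n - A n)
          = (n : ℂ) * B n - (n : ℂ) * α n
            + (n : ℂ) * ((starRingEnd ℂ) (α n) * aZ / (2 * (γ : ℂ) * (n : ℂ)))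
            + (n : ℂ) * ((starRingEnd ℂ) (β n) * z / ((Real.sqrt (2 * γ * n) : ℝ) : ℂ))
            - (n : ℂ) * (β n * (starRingEnd ℂ) z / ((Real.sqrt (2 * γ * n) : ℝ) : ℂ)) := by
        rw [hBdef, hAdef]
        simp only
        ring
      have h1 : (n : ℂ) * B n = (n : ℂ) - aZ / (2 * (γ : ℂ)) := by
        rw [hBdef]
        simp only [haZdef]
        push_cast
        field_simp
      have h2 : (n : ℂ) * α n = (n : ℂ) * ((Real.cosh (R n) : ℝ) : ℂ)
          - Complex.I * (2 * (γ : ℂ)) * (a₃ : ℂ) * sC := by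
        rw [hαn']
        field_simp
      have h3 : (n : ℂ) * ((starRingEnd ℂ) (α n) * aZ / (2 * (γ : ℂ) * (n : ℂ)))
          = (starRingEnd ℂ) (α n) * aZ / (2 * (γ : ℂ)) := by
        field_simp
      have h4 : (n : ℂ) * ((starRingEnd ℂ) (β n) * z / ((Real.sqrt (2 * γ * n) : ℝ) : ℂ))
          = ((a₂ : ℂ) + Complex.I * (a₁ : ℂ)) * sC * z := by
        rw [hterm1]
        field_simp
      have h5 : (n : ℂ) * (β n * (starRingEnd ℂ) z / ((Real.sqrt (2 * γ * n) : ℝ) : ℂ))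
          = ((a₂ : ℂ) - Complex.I * (a₁ : ℂ)) * sC * (starRingEnd ℂ) z := by
        rw [hterm2]
        field_simp
      rw [hsplit, h1, h2, h3, h4, h5]
      push_cast
      ring
    have hT2 : Tendsto (fun n => Complex.I * (2 * (γ : ℂ) * (a₃ : ℂ))
        * ((Real.sinh (R n) / (2 * R n) : ℝ) : ℂ)) atTop
        (nhds (Complex.I * (2 * (γ : ℂ) * (a₃ : ℂ)) * ((1/2 : ℝ) : ℂ))) :=
      tendsto_const_nhds.mul hsC
    have hT3 : Tendsto (fun n => ((starRingEnd ℂ) (α n) - 1)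
        * (((‖z‖ ^ 2 : ℝ) : ℂ) / (2 * (γ : ℂ)))) atTop (nhds 0) := by
      have h9 := (hconjα.sub (tendsto_const_nhds (x := (1:ℂ)))).mul_const
        (((‖z‖ ^ 2 : ℝ) : ℂ) / (2 * (γ : ℂ)))
      simpa using h9
    have hT4 : Tendsto (fun n => ((Real.sinh (R n) / (2 * R n) : ℝ) : ℂ)
        * ((a₂ : ℂ) + Complex.I * (a₁ : ℂ)) * z) atTop
        (nhds (((1/2 : ℝ) : ℂ) * ((a₂ : ℂ) + Complex.I * (a₁ : ℂ)) * z)) :=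
      (hsC.mul_const _).mul_const _
    have hT5 : Tendsto (fun n => ((Real.sinh (R n) / (2 * R n) : ℝ) : ℂ)
        * ((a₂ : ℂ) - Complex.I * (a₁ : ℂ)) * (starRingEnd ℂ) z) atTop
        (nhds (((1/2 : ℝ) : ℂ) * ((a₂ : ℂ) - Complex.I * (a₁ : ℂ)) * (starRingEnd ℂ) z)) :=
      (hsC.mul_const _).mul_const _
    have hlim := (((htC.add hT2).add hT3).add hT4).sub hT5
    have hval : ((-(γ / 4 * (a₁ ^ 2 + a₂ ^ 2)) : ℝ) : ℂ)
          + Complex.I * (2 * (γ : ℂ) * (a₃ : ℂ)) * ((1/2 : ℝ) : ℂ) + 0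
          + ((1/2 : ℝ) : ℂ) * ((a₂ : ℂ) + Complex.I * (a₁ : ℂ)) * z
          - ((1/2 : ℝ) : ℂ) * ((a₂ : ℂ) - Complex.I * (a₁ : ℂ)) * (starRingEnd ℂ) z = L := by
      rw [hLdef]
      push_cast
      ring
    rw [hval] at hlim
    exact Tendsto.congr' hEq hlim
  -- B → 1, A → 1
  have hinvC : Tendsto (fun n : ℕ => ((n : ℂ))⁻¹) atTop (nhds 0) := by
    have h := (Complex.continuous_ofReal.tendsto 0).comp tendsto_inv_atTop_nhds_zero_nat
    refine Tendsto.congr (fun n => ?_) (by simpa using h)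
    simp [Function.comp_def]
  have hBA0 : Tendsto (fun n : ℕ => B n - A n) atTop (nhds 0) := by
    have h := hnd.mul hinvC
    have hEq : ∀ᶠ n : ℕ in atTop, (n : ℂ) * (B n - A n) * ((n : ℂ))⁻¹ = B n - A n := by
      filter_upwards [hgood] with n ⟨hn0, _⟩
      have hnne : (n : ℂ) ≠ 0 := by
        simpa using (by exact_mod_cast hn0.ne' : ((n : ℝ) : ℂ) ≠ 0)
      field_simp
    refine Tendsto.congr' hEq ?_
    simpa using h
  have hB1 : Tendsto B atTop (nhds 1) := by
    have hreal : Tendsto (fun n : ℕ => 1 - ‖z‖ ^ 2 / (2 * γ * n)) atTop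
        (nhds 1) := by
      have h1 : Tendsto (fun n : ℕ => ‖z‖ ^ 2 / (2 * γ * n)) atTop (nhds 0) := by
        have h2 : Tendsto (fun n : ℕ => ‖z‖ ^ 2 / (2 * γ) / n) atTop (nhds 0) :=
          tendsto_const_div_atTop_nhds_zero_nat _
        refine Tendsto.congr (fun n => ?_) h2
        rw [div_div]
      simpa using tendsto_const_nhds.sub h1
    have h3 := (Complex.continuous_ofReal.tendsto 1).comp hreal
    rw [hBdef]
    simpa only [Function.comp_def, Complex.ofReal_one] using h3
  have hA1 : Tendsto A atTop (nhds 1) := by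
    have h := hB1.sub hBA0
    have h2 : Tendsto (fun x => B x - (B x - A x)) atTop (nhds 1) := by simpa using h
    refine Tendsto.congr (fun n => ?_) h2
    ring
  have hAne : ∀ᶠ n : ℕ in atTop, A n ≠ 0 := hA1.eventually_ne one_ne_zero
  -- w n = B n / A n - 1
  set w : ℕ → ℂ := fun n => B n / A n - 1 with hwdef
  have hc : Tendsto (fun n : ℕ => (n : ℂ) * w n) atTop (nhds L) := by
    have h := hnd.div hA1 one_ne_zero
    have hEq : ∀ᶠ n : ℕ in atTop, (n : ℂ) * (B n - A n) / A n = (n : ℂ) * w n := by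
      filter_upwards [hAne] with n hAn
      rw [hwdef]
      field_simp
    refine Tendsto.congr' hEq ?_
    simpa only [div_one, Pi.div_def] using h
  have hw0 : Tendsto w atTop (nhds 0) := by
    have h := hc.mul hinvC
    have hEq : ∀ᶠ n : ℕ in atTop, (n : ℂ) * w n * ((n : ℂ))⁻¹ = w n := by
      filter_upwards [hgood] with n ⟨hn0, _⟩
      have hnne : (n : ℂ) ≠ 0 := by
        simpa using (by exact_mod_cast hn0.ne' : ((n : ℝ) : ℂ) ≠ 0)
      field_simp
    refine Tendsto.congr' hEq ?_
    simpa using h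
  have hwsmall : ∀ᶠ n : ℕ in atTop, ‖w n‖ < 1/2 := by
    have h := hw0.norm
    simp only [norm_zero] at h
    exact h.eventually (eventually_lt_nhds (by norm_num))
  -- n log(1 + w n) → L
  have hsecond : Tendsto (fun n : ℕ => (n : ℂ) * (Complex.log (1 + w n) - w n)) atTop
      (nhds 0) := by
    have hg : Tendsto (fun n : ℕ => ‖(n : ℂ) * w n‖ * (‖w n‖ * (1 - ‖w n‖)⁻¹ / 2)) atTop
        (nhds 0) := by
      have h1 : Tendsto (fun n : ℕ => ‖w n‖) atTop (nhds 0) := by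
        simpa using hw0.norm
      have h2 : Tendsto (fun n : ℕ => (1 - ‖w n‖)⁻¹) atTop (nhds 1) := by
        have h3 := (tendsto_const_nhds (x := (1:ℝ))).sub h1
        have h4 := h3.inv₀ (by norm_num)
        simpa using h4
      have h5 := hc.norm.mul ((h1.mul h2).div_const 2)
      simpa using h5
    refine squeeze_zero_norm' ?_ hg
    filter_upwards [hwsmall] with n hn
    have hb := Complex.norm_log_one_add_sub_self_le (z := w n) (by linarith)
    calc ‖(n : ℂ) * (Complex.log (1 + w n) - w n)‖
        = (n : ℝ) * ‖Complex.log (1 + w n) - w n‖ := by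
          rw [norm_mul, Complex.norm_natCast]
      _ ≤ (n : ℝ) * (‖w n‖ ^ 2 * (1 - ‖w n‖)⁻¹ / 2) :=
          mul_le_mul_of_nonneg_left hb (Nat.cast_nonneg n)
      _ = ‖(n : ℂ) * w n‖ * (‖w n‖ * (1 - ‖w n‖)⁻¹ / 2) := by
          rw [norm_mul, Complex.norm_natCast]
          ring
  have hT : Tendsto (fun n : ℕ => (n : ℂ) * Complex.log (1 + w n)) atTop (nhds L) := by
    have h := hc.add hsecond
    have h2 : Tendsto (fun n : ℕ => (n : ℂ) * w n + (n : ℂ) * (Complex.log (1 + w n) - w n))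
        atTop (nhds L) := by simpa using h
    refine Tendsto.congr (fun n => ?_) h2
    ring
  have hexp : Tendsto (fun n : ℕ => Complex.exp ((n : ℂ) * Complex.log (1 + w n))) atTop
      (nhds (Complex.exp L)) := (Complex.continuous_exp.tendsto L).comp hT
  -- conclude
  refine Tendsto.congr' ?_ hexp
  filter_upwards [hAne, hwsmall] with n hAn hwn
  have hQ : (1 : ℂ) + w n = B n / A n := by rw [hwdef]; ring
  have hQne : (1 : ℂ) + w n ≠ 0 := by
    intro h
    have : w n = -1 := by linear_combination h
    rw [this] at hwn
    norm_num at hwn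
  have hBne : B n ≠ 0 := by
    intro h
    rw [hQ, h] at hQne
    simp at hQne
  show Complex.exp ((n : ℂ) * Complex.log (1 + w n)) = A n ^ (-(n : ℤ)) * B n ^ (n : ℕ)
  rw [Complex.exp_nat_mul, Complex.exp_log hQne, hQ, div_pow, zpow_neg, zpow_natCast]
  field_simp
end

section
/- Let γ > 0. Then for every λ ∈ ℝ, lim_{n→∞} (1/(2π)) ∫_ℝ e^{−itλ} (cosh(t √(γ/(2n))))^{−n} dt = (πγ)^{−1/2} e^{−λ²/γ}. That is, the spectral densities of the operators −i dπ_n(C_{r(n)}(v₁)) in the state 1 ∈ H_n converge pointwise to the Gaussian spectral density of −i dπ_γ(v₁) in the state 1 ∈ H_γ. -/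
open Filter MeasureTheory Topology

set_option maxHeartbeats 1000000

private lemma one_add_half_sq_le_cosh (x : ℝ) : 1 + x ^ 2 / 2 ≤ Real.cosh x := by
  rw [← Real.cosh_abs, show |x| = 2 * (|x| / 2) by ring, Real.cosh_two_mul]
  have hs : |x| / 2 ≤ Real.sinh (|x| / 2) := Real.self_le_sinh_iff.2 (by positivity)
  have hsq : (|x| / 2) ^ 2 ≤ Real.sinh (|x| / 2) ^ 2 :=
    pow_le_pow_left₀ (by positivity) hs 2
  have hc : Real.cosh (|x| / 2) ^ 2 = Real.sinh (|x| / 2) ^ 2 + 1 := Real.cosh_sq _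
  have habs : (|x| / 2) ^ 2 = x ^ 2 / 4 := by
    rw [div_pow, sq_abs]; ring
  nlinarith [hsq]

private lemma log_cosh_le (x : ℝ) : Real.log (Real.cosh x) ≤ x ^ 2 / 2 := by
  calc Real.log (Real.cosh x) ≤ Real.log (Real.exp (x ^ 2 / 2)) :=
        Real.log_le_log (Real.cosh_pos _) (Real.cosh_le_exp_half_sq x)
    _ = x ^ 2 / 2 := Real.log_exp _

private lemma le_log_cosh (x : ℝ) :
    x ^ 2 / 2 - (x ^ 2 / 2) ^ 2 ≤ Real.log (Real.cosh x) := by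
  set u : ℝ := x ^ 2 / 2 with hu
  have hu0 : 0 ≤ u := by positivity
  have h1u : (0:ℝ) < 1 + u := by linarith
  have h1 : Real.log (1 + u)⁻¹ ≤ (1 + u)⁻¹ - 1 := Real.log_le_sub_one_of_pos (by positivity)
  rw [Real.log_inv] at h1
  have h2 : 1 - (1 + u)⁻¹ ≤ Real.log (1 + u) := by linarith
  have h3 : u - u ^ 2 ≤ 1 - (1 + u)⁻¹ := by
    have : (1 + u)⁻¹ ≤ 1 - u + u ^ 2 := by
      rw [inv_le_iff_one_le_mul₀ h1u]
      nlinarith [sq_nonneg u, pow_le_pow_left₀ hu0 (le_refl u) 3]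
    linarith
  have h4 : Real.log (1 + u) ≤ Real.log (Real.cosh x) :=
    Real.log_le_log h1u (one_add_half_sq_le_cosh x)
  linarith

private lemma key_tendsto (γ : ℝ) (hγ : 0 < γ) (t : ℝ) :
    Tendsto (fun n : ℕ => ((Real.cosh (t * Real.sqrt (γ / (2 * n)))) ^ (-(n : ℤ)) : ℝ))
      atTop (𝓝 (Real.exp (-(γ * t ^ 2 / 4)))) := by
  set s : ℕ → ℝ := fun n => Real.sqrt (γ / (2 * n)) with hs
  have hc : ∀ n : ℕ, 0 < Real.cosh (t * s n) := fun n => Real.cosh_pos _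
  have heq : ∀ n : ℕ, (Real.cosh (t * s n)) ^ (-(n : ℤ)) =
      Real.exp (-((n : ℝ) * Real.log (Real.cosh (t * s n)))) := by
    intro n
    rw [zpow_neg, zpow_natCast, Real.exp_neg, Real.exp_nat_mul, Real.exp_log (hc n)]
  have hmain : Tendsto (fun n : ℕ => (n : ℝ) * Real.log (Real.cosh (t * s n)))
      atTop (𝓝 (γ * t ^ 2 / 4)) := by
    have hlow : Tendsto (fun n : ℕ => γ * t ^ 2 / 4 - γ ^ 2 * t ^ 4 / 16 * (1 / (n : ℝ)))
        atTop (𝓝 (γ * t ^ 2 / 4)) := by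
      have h0 : Tendsto (fun n : ℕ => γ ^ 2 * t ^ 4 / 16 * (1 / (n : ℝ))) atTop (𝓝 0) := by
        simpa using (tendsto_one_div_atTop_nhds_zero_nat (𝕜 := ℝ)).const_mul (γ ^ 2 * t ^ 4 / 16)
      simpa using (tendsto_const_nhds (x := γ * t ^ 2 / 4)).sub h0
    refine tendsto_of_tendsto_of_tendsto_of_le_of_le' hlow tendsto_const_nhds ?_ ?_
    · filter_upwards [eventually_ge_atTop 1] with n hn
      have hn0 : (0:ℝ) < (n : ℝ) := by exact_mod_cast hn
      have hsq : (s n) ^ 2 = γ / (2 * n) := Real.sq_sqrt (by positivity)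
      have hx2 : (t * s n) ^ 2 / 2 = γ * t ^ 2 / (4 * n) := by
        rw [mul_pow, hsq]; field_simp; ring
      have := le_log_cosh (t * s n)
      have h5 : (n : ℝ) * ((t * s n) ^ 2 / 2 - ((t * s n) ^ 2 / 2) ^ 2) ≤
          (n : ℝ) * Real.log (Real.cosh (t * s n)) :=
        mul_le_mul_of_nonneg_left this (by positivity)
      have h6 : (n : ℝ) * ((t * s n) ^ 2 / 2 - ((t * s n) ^ 2 / 2) ^ 2) =
          γ * t ^ 2 / 4 - γ ^ 2 * t ^ 4 / 16 * (1 / (n : ℝ)) := by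
        rw [hx2]; field_simp; ring
      linarith
    · filter_upwards [eventually_ge_atTop 1] with n hn
      have hn0 : (0:ℝ) < (n : ℝ) := by exact_mod_cast hn
      have hsq : (s n) ^ 2 = γ / (2 * n) := Real.sq_sqrt (by positivity)
      have h5 : (n : ℝ) * Real.log (Real.cosh (t * s n)) ≤ (n : ℝ) * ((t * s n) ^ 2 / 2) :=
        mul_le_mul_of_nonneg_left (log_cosh_le _) (by positivity)
      have h6 : (n : ℝ) * ((t * s n) ^ 2 / 2) = γ * t ^ 2 / 4 := by
        rw [mul_pow, hsq]; field_simp; ring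
      linarith
  have := (Real.continuous_exp.tendsto _).comp hmain.neg
  show Tendsto (fun n : ℕ => (Real.cosh (t * s n)) ^ (-(n : ℤ))) atTop _
  simpa only [Function.comp_def, heq] using this

private lemma norm_F (γ : ℝ) (l : ℝ) (n : ℕ) (t : ℝ) :
    ‖Complex.exp (-(Complex.I * t * l))
        * (((Real.cosh (t * Real.sqrt (γ / (2 * n)))) ^ (-(n : ℤ)) : ℝ) : ℂ)‖
      = (Real.cosh (t * Real.sqrt (γ / (2 * n)))) ^ (-(n : ℤ)) := by
  rw [norm_mul]
  simp only [Complex.norm_exp, Complex.norm_real, Real.norm_eq_abs]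
  have hre : (-(Complex.I * t * l)).re = 0 := by simp
  rw [hre, Real.exp_zero, one_mul, abs_of_pos (zpow_pos (Real.cosh_pos _) _)]

private lemma integral_tendsto (γ : ℝ) (hγ : 0 < γ) (l : ℝ) :
    Tendsto (fun n : ℕ =>
        ∫ t : ℝ, Complex.exp (-(Complex.I * t * l))
            * (((Real.cosh (t * Real.sqrt (γ / (2 * n)))) ^ (-(n : ℤ)) : ℝ) : ℂ))
      atTop
      (𝓝 (∫ t : ℝ, Complex.exp (-(Complex.I * t * l))
            * ((Real.exp (-(γ * t ^ 2 / 4)) : ℝ) : ℂ))) := by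
  have C0 : (0:ℝ) < min 1 (γ / 4) := lt_min one_pos (by positivity)
  apply tendsto_integral_filter_of_dominated_convergence
    (bound := fun t : ℝ => (min 1 (γ / 4))⁻¹ * (1 + t ^ 2)⁻¹)
  · filter_upwards with n
    apply Continuous.aestronglyMeasurable
    apply Continuous.mul
    · exact Complex.continuous_exp.comp (by continuity)
    · apply Complex.continuous_ofReal.comp
      have : (fun t : ℝ => (Real.cosh (t * Real.sqrt (γ / (2 * n)))) ^ (-(n : ℤ))) =
          fun t : ℝ => ((Real.cosh (t * Real.sqrt (γ / (2 * n)))) ^ n)⁻¹ := by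
        funext t; rw [zpow_neg, zpow_natCast]
      rw [this]
      exact ((Real.continuous_cosh.comp (continuous_id.mul continuous_const)).pow n).inv₀
        (fun t => pow_ne_zero _ (Real.cosh_pos _).ne')
  · filter_upwards [eventually_ge_atTop 1] with n hn
    filter_upwards with t
    rw [norm_F]
    set sn : ℝ := Real.sqrt (γ / (2 * n)) with hsn
    have hn0 : (0:ℝ) < (n : ℝ) := by exact_mod_cast hn
    have hsq : sn ^ 2 = γ / (2 * n) := Real.sq_sqrt (by positivity)
    have hb : 1 + γ * t ^ 2 / 4 ≤ (Real.cosh (t * sn)) ^ n := by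
      have h1 : 1 + (n : ℝ) * ((t * sn) ^ 2 / 2) ≤ (1 + (t * sn) ^ 2 / 2) ^ n :=
        one_add_mul_le_pow (by nlinarith [sq_nonneg (t * sn)] : (-2:ℝ) ≤ (t * sn) ^ 2 / 2) n
      have h2 : (1 + (t * sn) ^ 2 / 2) ^ n ≤ (Real.cosh (t * sn)) ^ n :=
        pow_le_pow_left₀ (by positivity) (one_add_half_sq_le_cosh _) n
      have h3 : (n : ℝ) * ((t * sn) ^ 2 / 2) = γ * t ^ 2 / 4 := by
        rw [mul_pow, hsq]; field_simp; ring
      linarith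
    have hpos1 : (0:ℝ) < 1 + γ * t ^ 2 / 4 := by positivity
    rw [zpow_neg, zpow_natCast]
    have step1 : ((Real.cosh (t * sn)) ^ n)⁻¹ ≤ (1 + γ * t ^ 2 / 4)⁻¹ :=
      inv_anti₀ hpos1 hb
    have step2 : (1 + γ * t ^ 2 / 4)⁻¹ ≤ (min 1 (γ / 4))⁻¹ * (1 + t ^ 2)⁻¹ := by
      rw [← mul_inv]
      apply inv_anti₀ (by positivity)
      have h1 : min 1 (γ / 4) * 1 ≤ 1 := by
        simpa using min_le_left 1 (γ / 4)
      have h2 : min 1 (γ / 4) * t ^ 2 ≤ γ / 4 * t ^ 2 :=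
        mul_le_mul_of_nonneg_right (min_le_right _ _) (sq_nonneg t)
      nlinarith
    linarith
  · exact (integrable_inv_one_add_sq).const_mul _
  · filter_upwards with t
    exact tendsto_const_nhds.mul
      ((Complex.continuous_ofReal.tendsto _).comp (key_tendsto γ hγ t))

private lemma integral_value (γ : ℝ) (hγ : 0 < γ) (l : ℝ) :
    (((2 * Real.pi)⁻¹ : ℝ) : ℂ) * ∫ t : ℝ, Complex.exp (-(Complex.I * t * l))
        * ((Real.exp (-(γ * t ^ 2 / 4)) : ℝ) : ℂ)
      = (((Real.sqrt (Real.pi * γ))⁻¹ * Real.exp (-l ^ 2 / γ) : ℝ) : ℂ) := by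
  have hb : (0:ℝ) < (((γ / 4 : ℝ) : ℂ)).re := by rw [Complex.ofReal_re]; positivity
  have hI0 := fourierIntegral_gaussian hb (-l : ℂ)
  have hfeq : (fun t : ℝ => Complex.exp (-(Complex.I * t * l))
        * ((Real.exp (-(γ * t ^ 2 / 4)) : ℝ) : ℂ))
      = fun t : ℝ => Complex.exp (Complex.I * (-l : ℂ) * t)
        * Complex.exp (-((γ / 4 : ℝ) : ℂ) * (t : ℂ) ^ 2) := by
    funext t
    have e1 : -(Complex.I * t * l) = Complex.I * (-l : ℂ) * t := by ring
    have e2 : ((-(γ * t ^ 2 / 4) : ℝ) : ℂ) = -((γ / 4 : ℝ) : ℂ) * (t : ℂ) ^ 2 := by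
      push_cast; ring
    rw [e1, Complex.ofReal_exp, e2]
  rw [hfeq, hI0]
  have hpow : ((Real.pi : ℂ) / ((γ / 4 : ℝ) : ℂ)) ^ (1 / 2 : ℂ)
      = ((Real.sqrt (4 * Real.pi / γ) : ℝ) : ℂ) := by
    have h1 : ((Real.pi : ℂ) / ((γ / 4 : ℝ) : ℂ)) = ((Real.pi / (γ / 4) : ℝ) : ℂ) := by
      push_cast; ring
    rw [h1, show (1 / 2 : ℂ) = ((1 / 2 : ℝ) : ℂ) by push_cast; ring,
      ← Complex.ofReal_cpow (by positivity), Real.sqrt_eq_rpow,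
      show Real.pi / (γ / 4) = 4 * Real.pi / γ by field_simp]
  have hexp : Complex.exp (-(-l : ℂ) ^ 2 / (4 * ((γ / 4 : ℝ) : ℂ)))
      = ((Real.exp (-l ^ 2 / γ) : ℝ) : ℂ) := by
    have hγc : (γ : ℂ) ≠ 0 := by exact_mod_cast hγ.ne'
    rw [Complex.ofReal_exp]
    congr 1
    push_cast
    field_simp
  have hsqrt : Real.sqrt (4 * Real.pi / γ) = 2 * Real.pi / Real.sqrt (Real.pi * γ) := by
    rw [show 4 * Real.pi / γ = (2 * Real.pi) ^ 2 / (Real.pi * γ) by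
      field_simp; ring]
    rw [Real.sqrt_div (by positivity), Real.sqrt_sq (by positivity)]
  rw [hpow, hexp, hsqrt]
  push_cast
  have h2π : ((Real.pi : ℝ) : ℂ) ≠ 0 := by
    exact_mod_cast Real.pi_ne_zero
  field_simp

/-- Convergence of the spectral densities in the contraction of the holomorphic
discrete series of `SU(1,1)` to the Heisenberg representation: for `γ > 0` and every
`λ ∈ ℝ`,
`lim_{n→∞} (1/(2π)) ∫ e^{−itλ} (cosh (t√(γ/(2n))))^{−n} dt = (πγ)^{−1/2} e^{−λ²/γ}`. -/
theorem spectral_density_contraction_su11 (γ : ℝ) (hγ : 0 < γ) (l : ℝ) :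
    Tendsto (fun n : ℕ =>
        (((2 * Real.pi)⁻¹ : ℝ) : ℂ)
          * ∫ t : ℝ, Complex.exp (-(Complex.I * t * l))
              * (((Real.cosh (t * Real.sqrt (γ / (2 * n)))) ^ (-(n : ℤ)) : ℝ) : ℂ))
      atTop
      (nhds ((((Real.sqrt (Real.pi * γ))⁻¹ * Real.exp (-l ^ 2 / γ) : ℝ) : ℂ))) := by
  have h := (integral_tendsto γ hγ l).const_mul ((((2 * Real.pi)⁻¹ : ℝ) : ℂ))
  rwa [integral_value γ hγ l] at h
end

section
/- Let m be a positive integer and let k be an integer with 0 ≤ k ≤ m. Then ∫_ℂ |z − 1|^{2k} |z + 1|^{2(m−k)} · ((m+1)/π) (1 + |z|²)^{−m−2} dA(z) = 2^m · (binomial(m,k))⁻¹, where dA is Lebesgue measure on ℂ. That is, the eigenvector F_k^m(z) = (z−1)^k (z+1)^{m−k} has squared norm 2^m / binomial(m,k) in the space F_m. -/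
open MeasureTheory Set Filter
open scoped Nat Real

lemma tend_aux (j n : ℕ) (h : j < n) :
    Tendsto (fun x : ℝ => x ^ j * (((1 + x) ^ n)⁻¹)) atTop (nhds 0) := by
  have hb : Tendsto (fun x : ℝ => (1 + x)⁻¹) atTop (nhds 0) :=
    tendsto_inv_atTop_zero.comp (tendsto_atTop_add_const_left _ 1 tendsto_id)
  apply squeeze_zero' (g := fun x : ℝ => (1 + x)⁻¹)
  · filter_upwards [eventually_ge_atTop (0:ℝ)] with x hx
    positivity
  · filter_upwards [eventually_ge_atTop (0:ℝ)] with x hx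
    have h1 : x ^ j ≤ (1 + x) ^ j := pow_le_pow_left₀ hx (by linarith) j
    have h2 : (1 + x) ^ (j + 1) ≤ (1 + x) ^ n := pow_le_pow_right₀ (by linarith) h
    have hpos : (0:ℝ) < 1 + x := by linarith
    calc x ^ j * ((1 + x) ^ n)⁻¹ ≤ (1 + x) ^ j * ((1 + x) ^ (j+1))⁻¹ := by
          apply mul_le_mul h1 (inv_anti₀ (by positivity) h2) (by positivity)
            (by positivity)
      _ = (1 + x)⁻¹ := by
          rw [pow_succ, mul_inv]
          field_simp
  · exact hb

lemma hasDeriv_neg_inv (x : ℝ) (hne : (1:ℝ) + x ≠ 0) :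
    HasDerivAt (fun x : ℝ => -((1 + x)⁻¹)) (((1 + x) ^ 2)⁻¹) x := by
  have h : HasDerivAt (fun x : ℝ => (1 + x)⁻¹) (-1 / (1+x)^2) x :=
    (((hasDerivAt_id x).const_add 1).inv hne)
  refine h.neg.congr_deriv ?_
  field_simp

lemma integrable_base : IntegrableOn (fun x : ℝ => ((1 + x) ^ 2)⁻¹) (Ioi (0:ℝ)) := by
  apply integrableOn_Ioi_deriv_of_nonneg (g := fun x : ℝ => -((1 + x)⁻¹)) (l := 0)
  · exact (((continuousAt_const.add continuousAt_id).inv₀ (by norm_num)).neg).continuousWithinAt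
  · intro x hx
    exact hasDeriv_neg_inv x (by have : (0:ℝ) < x := hx; positivity)
  · intro x hx; positivity
  · have hb : Tendsto (fun x : ℝ => (1 + x)⁻¹) atTop (nhds 0) :=
      tendsto_inv_atTop_zero.comp (tendsto_atTop_add_const_left _ 1 tendsto_id)
    simpa using hb.neg

lemma integrable_aux (j n : ℕ) (h : j + 2 ≤ n) :
    IntegrableOn (fun x : ℝ => x ^ j * (((1 + x) ^ n)⁻¹)) (Ioi (0:ℝ)) := by
  apply Integrable.mono' integrable_base
  · exact (((measurable_id.pow_const j).mul
      (((measurable_const.add measurable_id).pow_const n).inv)).aestronglyMeasurable)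
  · filter_upwards [ae_restrict_mem measurableSet_Ioi] with x hx
    have hx0 : (0:ℝ) < x := hx
    have h1 : x ^ j ≤ (1 + x) ^ j := pow_le_pow_left₀ hx0.le (by linarith) j
    have h2 : (1 + x) ^ (j + 2) ≤ (1 + x) ^ n := pow_le_pow_right₀ (by linarith) h
    have key : x ^ j * ((1 + x) ^ n)⁻¹ ≤ ((1 + x) ^ 2)⁻¹ := by
      calc x ^ j * ((1 + x) ^ n)⁻¹ ≤ (1 + x) ^ j * ((1 + x) ^ (j+2))⁻¹ :=
            mul_le_mul h1 (inv_anti₀ (by positivity) h2) (by positivity) (by positivity)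
        _ = ((1 + x) ^ 2)⁻¹ := by
            rw [pow_add, mul_inv]
            field_simp
    rw [Real.norm_eq_abs, abs_of_nonneg (by positivity)]
    exact key

lemma hasDeriv_inv_pow (s : ℕ) (x : ℝ) (hne : (1:ℝ) + x ≠ 0) :
    HasDerivAt (fun x : ℝ => ((1 + x) ^ (s+1))⁻¹) (-((s:ℝ)+1) * ((1 + x) ^ (s+2))⁻¹) x := by
  have h1 : HasDerivAt (fun x : ℝ => (1 + x) ^ (s+1)) (((s:ℝ)+1) * (1 + x) ^ s) x := by
    have := (((hasDerivAt_id x).const_add 1).pow (s+1))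
    exact this.congr_deriv (by simp)
  have h2 := h1.inv (pow_ne_zero _ hne)
  refine h2.congr_deriv ?_
  field_simp
  ring

lemma value_aux (a b : ℕ) :
    ∫ x in Ioi (0:ℝ), x ^ a * (((1 + x) ^ (a + b + 2))⁻¹)
      = (a ! : ℝ) * (b ! : ℝ) / ((a + b + 1)! : ℝ) := by
  induction a with
  | zero =>
      have key : ∫ x in Ioi (0:ℝ), ((1 + x) ^ (b + 2))⁻¹ = ((b:ℝ)+1)⁻¹ := by
        have hder : ∀ x ∈ Ioi (0:ℝ), HasDerivAt
            (fun x : ℝ => -(((b:ℝ)+1)⁻¹ * ((1 + x) ^ (b+1))⁻¹)) (((1 + x) ^ (b+2))⁻¹) x := by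
          intro x hx
          have hx0 : (0:ℝ) < x := hx
          have := ((hasDeriv_inv_pow b x (by positivity)).const_mul (((b:ℝ)+1)⁻¹)).neg
          refine this.congr_deriv ?_
          field_simp
        have hcont : ContinuousWithinAt
            (fun x : ℝ => -(((b:ℝ)+1)⁻¹ * ((1 + x) ^ (b+1))⁻¹)) (Ici 0) 0 := by
          apply ContinuousAt.continuousWithinAt
          have : ContinuousAt (fun x : ℝ => (1 + x) ^ (b+1)) 0 :=
            ((continuous_const.add continuous_id).pow (b+1)).continuousAt
          exact ((continuousAt_const.mul (this.inv₀ (by norm_num))).neg)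
        have hint : IntegrableOn (fun x : ℝ => ((1 + x) ^ (b+2))⁻¹) (Ioi (0:ℝ)) := by
          have := integrable_aux 0 (b+2) (by omega)
          simpa using this
        have htend : Tendsto (fun x : ℝ => -(((b:ℝ)+1)⁻¹ * ((1 + x) ^ (b+1))⁻¹))
            atTop (nhds 0) := by
          have := ((tend_aux 0 (b+1) (by omega)).const_mul (((b:ℝ)+1)⁻¹)).neg
          simpa using this
        have := integral_Ioi_of_hasDerivAt_of_tendsto hcont hder hint htend
        rw [this]
        norm_num
      simp only [pow_zero, one_mul, Nat.zero_add]
      rw [key, Nat.factorial_zero, Nat.factorial_succ]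
      have hb : ((b:ℝ) + 1) ≠ 0 := by positivity
      have hf : ((b ! : ℕ) : ℝ) ≠ 0 := by positivity
      push_cast
      field_simp
  | succ a ih =>
      have hne2 : ((a:ℝ) + b + 2) ≠ 0 := by positivity
      set g1 : ℝ → ℝ := fun x => x ^ a * ((1 + x) ^ (a + b + 2))⁻¹ with hg1
      set g2 : ℝ → ℝ := fun x => x ^ (a+1) * ((1 + x) ^ (a + b + 3))⁻¹ with hg2
      have hi1 : IntegrableOn g1 (Ioi (0:ℝ)) := integrable_aux a (a+b+2) (by omega)
      have hi2 : IntegrableOn g2 (Ioi (0:ℝ)) := integrable_aux (a+1) (a+b+3) (by omega)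
      have hder : ∀ x ∈ Ioi (0:ℝ), HasDerivAt
          (fun x : ℝ => x ^ (a+1) * ((1 + x) ^ (a + b + 2))⁻¹)
          (((a:ℝ)+1) * g1 x - ((a:ℝ)+b+2) * g2 x) x := by
        intro x hx
        have hx0 : (0:ℝ) < x := hx
        have hp : HasDerivAt (fun x : ℝ => x ^ (a+1)) (((a:ℝ)+1) * x ^ a) x := by
          have := hasDerivAt_pow (a+1) x
          simpa using this
        have hq := hasDeriv_inv_pow (a+b+1) x (by positivity)
        have := hp.mul hq
        refine this.congr_deriv ?_
        simp only [hg1, hg2, show a + b + 1 + 1 = a + b + 2 from rfl,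
          show a + b + 1 + 2 = a + b + 3 from rfl]
        push_cast
        ring
      have hcont : ContinuousWithinAt
          (fun x : ℝ => x ^ (a+1) * ((1 + x) ^ (a + b + 2))⁻¹) (Ici 0) 0 := by
        apply ContinuousAt.continuousWithinAt
        exact (continuousAt_pow _ _).mul
          ((((continuous_const.add continuous_id).pow _).continuousAt).inv₀ (by norm_num))
      have hint : IntegrableOn (fun x => ((a:ℝ)+1) * g1 x - ((a:ℝ)+b+2) * g2 x) (Ioi (0:ℝ)) :=
        (hi1.const_mul _).sub (hi2.const_mul _)
      have htend : Tendsto (fun x : ℝ => x ^ (a+1) * ((1 + x) ^ (a + b + 2))⁻¹)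
          atTop (nhds 0) := tend_aux (a+1) (a+b+2) (by omega)
      have key := integral_Ioi_of_hasDerivAt_of_tendsto hcont hder hint htend
      rw [integral_sub (hi1.const_mul _) (hi2.const_mul _), integral_const_mul,
        integral_const_mul] at key
      norm_num at key
      -- key : (a+1) * ∫ g1 - (a+b+2) * ∫ g2 = 0
      have hIg1 : ∫ x in Ioi (0:ℝ), g1 x = (a ! : ℝ) * (b ! : ℝ) / ((a + b + 1)! : ℝ) := ih
      have : ∫ x in Ioi (0:ℝ), g2 x
          = (((a:ℝ)+1) / ((a:ℝ)+b+2)) * ((a ! : ℝ) * (b ! : ℝ) / ((a + b + 1)! : ℝ)) := by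
        rw [← hIg1]
        field_simp at key ⊢
        linarith [key]
      rw [show (a + 1 + b + 2) = (a + b + 2) + 1 by omega]
      have h3 : ∫ x in Ioi (0:ℝ), x ^ (a+1) * ((1 + x) ^ ((a + b + 2) + 1))⁻¹
          = ∫ x in Ioi (0:ℝ), g2 x := by
        rfl
      rw [h3, this]
      rw [show (a + 1 + b + 1) = (a + b + 1) + 1 by omega]
      rw [Nat.factorial_succ (a+b+1), Nat.factorial_succ a]
      have hfac : ((a+b+1)! : ℝ) ≠ 0 := by positivity
      push_cast
      field_simp
      ring

lemma planar_aux (k b : ℕ) :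
    ∫ w : ℂ, (‖w‖) ^ (2 * k) * ((1 + (‖w‖) ^ 2) ^ (k + b + 2))⁻¹
      = Real.pi * (k ! : ℝ) * (b ! : ℝ) / ((k + b + 1)! : ℝ) := by
  set n := k + b + 2 with hn
  calc
    _ = ∫ p in Ioi (0:ℝ) ×ˢ Ioo (-π) π,
          p.1 * (|p.1| ^ (2*k) * ((1 + |p.1| ^ 2) ^ n)⁻¹) := by
        rw [← Complex.integral_comp_polarCoord_symm
          (fun w => (‖w‖) ^ (2 * k) * ((1 + (‖w‖) ^ 2) ^ n)⁻¹),
          polarCoord_target]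
        simp_rw [Complex.norm_polarCoord_symm, smul_eq_mul]
    _ = (∫ x in Ioi (0:ℝ), x * (|x| ^ (2*k) * ((1 + |x| ^ 2) ^ n)⁻¹)) * ∫ _ in Ioo (-π) π, (1:ℝ) := by
        rw [← setIntegral_prod_mul, Measure.volume_eq_prod]
        simp_rw [mul_one]
    _ = (2 * π) * ∫ x in Ioi (0:ℝ), x * (|x| ^ (2*k) * ((1 + |x| ^ 2) ^ n)⁻¹) := by
        simp only [integral_const, measureReal_def, Measure.restrict_apply MeasurableSet.univ, Set.univ_inter,
          Real.volume_Ioo, sub_neg_eq_add, ← two_mul, ENNReal.toReal_ofReal (by positivity : 0 ≤ 2*π),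
          smul_eq_mul, mul_one]
        ring
    _ = (2 * π) * ∫ x in Ioi (0:ℝ),
          (1/2) * ((2 * x ^ ((2:ℝ) - 1)) • (((x ^ (2:ℝ)) ^ k) * ((1 + x ^ (2:ℝ)) ^ n)⁻¹)) := by
        congr 1
        refine setIntegral_congr_fun measurableSet_Ioi (fun x hx => ?_)
        have hx0 : (0:ℝ) < x := hx
        rw [abs_of_pos hx0, smul_eq_mul]
        rw [show (2:ℝ) - 1 = 1 by norm_num, Real.rpow_one,
          Real.rpow_two]
        rw [← pow_mul]
        ring
    _ = π * ∫ x in Ioi (0:ℝ), x ^ k * ((1 + x) ^ n)⁻¹ := by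
        rw [integral_const_mul, integral_comp_rpow_Ioi_of_pos
          (g := fun t : ℝ => t ^ k * ((1 + t) ^ n)⁻¹) zero_lt_two]
        ring
    _ = _ := by
        rw [hn, value_aux k b]
        ring

lemma det_complex_mul (c : ℂ) :
    (((1 : ℂ →L[ℂ] ℂ).smulRight c).restrictScalars ℝ).det = Complex.normSq c := by
  rw [ContinuousLinearMap.det]
  have : (((1 : ℂ →L[ℂ] ℂ).smulRight c).restrictScalars ℝ : ℂ →ₗ[ℝ] ℂ)
      = Algebra.lmul ℝ ℂ c := by
    ext z
    · simp [Complex.ext_iff, mul_comm]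
  rw [this]
  have := Algebra.norm_complex_apply c
  rw [Algebra.norm_apply] at this
  exact this

noncomputable def phi (z : ℂ) : ℂ := (z - 1) / (z + 1)

lemma phi_image : phi '' ({(-1:ℂ)}ᶜ) = {(1:ℂ)}ᶜ := by
  ext w
  constructor
  · rintro ⟨z, hz, rfl⟩
    have hz1 : z + 1 ≠ 0 := by
      intro h; apply hz; simpa [eq_neg_iff_add_eq_zero] using h
    intro h
    simp only [mem_singleton_iff, phi] at h
    rw [div_eq_one_iff_eq hz1] at h
    have : (2:ℂ) = 0 := by linear_combination -h
    exact two_ne_zero this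
  · intro hw
    have hw1 : (1:ℂ) - w ≠ 0 := by
      intro h; apply hw; simp only [mem_singleton_iff]
      linear_combination -h
    refine ⟨(1 + w) / (1 - w), ?_, ?_⟩
    · intro h
      simp only [mem_singleton_iff, div_eq_iff hw1] at h
      have : (2:ℂ) = 0 := by linear_combination h
      exact two_ne_zero this
    · simp only [phi]
      rw [div_sub_one hw1, div_add_one hw1]
      rw [show 1 + w - (1 - w) = 2*w by ring, show 1 + w + (1 - w) = 2 by ring]
      rw [div_div_div_cancel_right₀]
      · exact mul_div_cancel_left₀ w two_ne_zero
      · exact hw1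
      
lemma phi_injOn : InjOn phi ({(-1:ℂ)}ᶜ) := by
  intro z₁ h₁ z₂ h₂ h
  have hz1 : z₁ + 1 ≠ 0 := by
    intro hh; apply h₁; simpa [eq_neg_iff_add_eq_zero] using hh
  have hz2 : z₂ + 1 ≠ 0 := by
    intro hh; apply h₂; simpa [eq_neg_iff_add_eq_zero] using hh
  simp only [phi, div_eq_div_iff hz1 hz2] at h
  linear_combination h / 2

lemma phi_deriv {z : ℂ} (hz : z + 1 ≠ 0) :
    HasDerivAt phi (2 / (z + 1) ^ 2) z := by
  have h1 : HasDerivAt (fun z : ℂ => z - 1) 1 z := (hasDerivAt_id z).sub_const 1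
  have h2 : HasDerivAt (fun z : ℂ => z + 1) 1 z := (hasDerivAt_id z).add_const 1
  have := h1.div h2 hz
  refine this.congr_deriv ?_
  field_simp
  ring

lemma cov (F : ℂ → ℝ) :
    ∫ w : ℂ, F w
      = ∫ z in ({(-1:ℂ)}ᶜ), Complex.normSq (2 / (z + 1) ^ 2) * F (phi z) := by
  have h1 : ∫ w : ℂ, F w = ∫ w in ({(1:ℂ)}ᶜ), F w := by
    rw [← setIntegral_univ]
    refine (setIntegral_congr_set ?_).symm
    rw [ae_eq_univ]
    simp [measure_singleton]
  rw [h1, ← phi_image]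
  rw [integral_image_eq_integral_abs_det_fderiv_smul volume
    (measurableSet_singleton _).compl
    (fun z hz => ?_) phi_injOn F]
  · refine setIntegral_congr_fun (measurableSet_singleton _).compl (fun z hz => ?_)
    have hz1 : z + 1 ≠ 0 := by
      intro hh; apply hz; simpa [eq_neg_iff_add_eq_zero] using hh
    rw [det_complex_mul, smul_eq_mul, abs_of_nonneg (Complex.normSq_nonneg _)]
  · have hz1 : z + 1 ≠ 0 := by
      intro hh; apply hz; simpa [eq_neg_iff_add_eq_zero] using hh
    exact (((phi_deriv hz1).hasFDerivAt).restrictScalars ℝ).hasFDerivWithinAt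

lemma sq_abs_sum (z : ℂ) :
    (‖z - 1‖) ^ 2 + (‖z + 1‖) ^ 2
      = 2 * (1 + (‖z‖) ^ 2) := by
  rw [Complex.sq_norm, Complex.sq_norm, Complex.sq_norm]
  simp only [Complex.normSq_apply, Complex.sub_re, Complex.sub_im, Complex.add_re,
    Complex.add_im, Complex.one_re, Complex.one_im]
  ring

lemma pointwise_id (k j : ℕ) (z : ℂ) (hz : z + 1 ≠ 0) :
    Complex.normSq (2 / (z + 1) ^ 2)
        * ((‖phi z‖) ^ (2 * k)
          * ((1 + (‖phi z‖) ^ 2) ^ (k + j + 2))⁻¹)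
      = (2 ^ (k + j) : ℝ)⁻¹ * ((‖z - 1‖) ^ (2 * k)
          * (‖z + 1‖) ^ (2 * j)
          * ((1 + (‖z‖) ^ 2) ^ (k + j + 2))⁻¹) := by
  set a := ‖z - 1‖ with ha
  set bb := ‖z + 1‖ with hbb
  set r := ‖z‖ with hr
  have hbb0 : 0 < bb := norm_pos_iff.mpr hz
  have hr0 : (0:ℝ) < 1 + r ^ 2 := by positivity
  have h2 : a ^ 2 + bb ^ 2 = 2 * (1 + r ^ 2) := sq_abs_sum z
  have habs : ‖phi z‖ = a / bb := by
    rw [phi, norm_div]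
  have hnsq : Complex.normSq (2 / (z + 1) ^ 2) = 4 / (bb ^ 2) ^ 2 := by
    rw [map_div₀, map_pow, show Complex.normSq (z + 1) = bb ^ 2 from (Complex.sq_norm _).symm]
    norm_num [Complex.normSq_apply]
  have e1 : 1 + (a / bb) ^ 2 = 2 * (1 + r ^ 2) / bb ^ 2 := by
    field_simp
    linear_combination h2
  rw [habs, hnsq, e1]
  rw [div_pow, div_pow, mul_pow]
  have ha0 : a ^ (2*k) ≥ 0 := by positivity
  field_simp
  ring

/-- Squared norm of the eigenvector `F_k^m(z) = (z−1)^k (z+1)^{m−k}` in the carrying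
space `F_m` of the spin-`m/2` representation of `SU(2)`:
`∫_ℂ |z−1|^{2k} |z+1|^{2(m−k)} ((m+1)/π)(1+|z|²)^{−m−2} dA(z) = 2^m / C(m,k)`. -/
theorem su2_eigenvector_norm (m : ℕ) (hm : 0 < m) (k : ℕ) (hk : k ≤ m) :
    ∫ z : ℂ, (‖z - 1‖) ^ (2 * k) * (‖z + 1‖) ^ (2 * (m - k))
        * (((m : ℝ) + 1) / Real.pi) * ((1 + (‖z‖) ^ 2) ^ (m + 2))⁻¹
      = 2 ^ m * ((Nat.choose m k : ℝ))⁻¹ := by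
  obtain ⟨j, rfl⟩ : ∃ j, m = k + j := ⟨m - k, by omega⟩
  simp only [Nat.add_sub_cancel_left]
  set c : ℝ := ((k + j : ℕ) : ℝ) + 1 with hc
  set F : ℂ → ℝ := fun w =>
    (‖w‖) ^ (2 * k) * ((1 + (‖w‖) ^ 2) ^ (k + j + 2))⁻¹ with hF
  set G : ℂ → ℝ := fun z =>
    (‖z - 1‖) ^ (2 * k) * (‖z + 1‖) ^ (2 * j)
      * ((1 + (‖z‖) ^ 2) ^ (k + j + 2))⁻¹ with hG
  have step1 : ∫ z : ℂ, (‖z - 1‖) ^ (2 * k) * (‖z + 1‖) ^ (2 * j)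
        * ((((k + j : ℕ) : ℝ) + 1) / Real.pi) * ((1 + (‖z‖) ^ 2) ^ (k + j + 2))⁻¹
      = (c / Real.pi) * ∫ z : ℂ, G z := by
    rw [← integral_const_mul]
    congr 1
    funext z
    simp only [hG]
    ring
  have step2 : ∫ z : ℂ, G z = 2 ^ (k + j) * ∫ w : ℂ, F w := by
    rw [cov F]
    have hnull : ∫ z : ℂ, G z = ∫ z in ({(-1:ℂ)}ᶜ), G z := by
      rw [← setIntegral_univ]
      refine (setIntegral_congr_set ?_).symm
      rw [ae_eq_univ]
      simp [measure_singleton]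
    rw [hnull, ← integral_const_mul]
    refine setIntegral_congr_fun (measurableSet_singleton _).compl (fun z hz => ?_)
    have hz1 : z + 1 ≠ 0 := by
      intro hh; apply hz; simpa [eq_neg_iff_add_eq_zero] using hh
    have := pointwise_id k j z hz1
    simp only [hF, hG]
    rw [this]
    rw [← mul_assoc, mul_inv_cancel₀ (by positivity : ((2:ℝ) ^ (k + j)) ≠ 0), one_mul]
  have step3 : ∫ w : ℂ, F w = Real.pi * (k ! : ℝ) * (j ! : ℝ) / (((k + j + 1)! : ℕ) : ℝ) :=
    planar_aux k j
  rw [step1, step2, step3]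
  have hchoose : (((k + j).choose k : ℕ) : ℝ) * (k ! : ℝ) * (j ! : ℝ) = (((k + j)! : ℕ) : ℝ) := by
    have h := Nat.choose_mul_factorial_mul_factorial (show k ≤ k + j by omega)
    rw [show k + j - k = j by omega] at h
    exact_mod_cast congrArg (Nat.cast : ℕ → ℝ) h
  have hfac1 : (((k + j + 1)! : ℕ) : ℝ) = (((k+j):ℕ) + 1) * (((k + j)! : ℕ) : ℝ) := by
    rw [Nat.factorial_succ]; push_cast; ring
  have hch0 : (((k + j).choose k : ℕ) : ℝ) ≠ 0 := by
    have := Nat.choose_pos (show k ≤ k + j by omega)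
    positivity
  have hpi : Real.pi ≠ 0 := Real.pi_ne_zero
  have hf0 : (((k + j)! : ℕ) : ℝ) ≠ 0 := by positivity
  rw [hfac1]
  field_simp [hc]
  linear_combination c * hchoose + (((k + j)! : ℕ) : ℝ) * hc
end
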